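/- arXiv:2311.06087 — 7 statements merged into one kernel-verified Lean document; each statement's English description precedes it below -/
import Mathlib

section
/- Consider an impulsive solution such that, for some constants λ* ≥ 0 and T_* > 0, one has 0 ≤ λₙ ≤ λ* and Tₙ ≥ T_* for all n (so that tₙ → ∞). Then the output satisfies the ultimate upper bound limsup_{t→∞} ȳ(t) ≤ (g₁g₂/(a₂a₃)) · λ*/(1 − e^{−a₁T_*}). -/
open Matrix

/-- The system matrix of the third-order PK model. -/
noncomputable def Amat (a₁ a₂ a₃ g₁ g₂ : ℝ) : Matrix (Fin 3) (Fin 3) ℝ :=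
  !![-a₁, 0, 0; g₁, -a₂, 0; 0, g₂, -a₃]

/-- The input vector `B = (1,0,0)ᵀ`. -/
noncomputable def Bvec : Fin 3 → ℝ := ![1, 0, 0]

/-- The output map `C x = x₃`. -/
noncomputable def Cout (x : Fin 3 → ℝ) : ℝ := x 2

section AuxExp
attribute [local instance] Matrix.linftyOpNormedRing Matrix.linftyOpNormedAlgebra

lemma PK_mulVec_entry_hasDerivAt (A : Matrix (Fin 3) (Fin 3) ℝ) (v : Fin 3 → ℝ) (i : Fin 3)
    (τ : ℝ) :
    HasDerivAt (fun s : ℝ => (NormedSpace.exp (s • A)).mulVec v i)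
      (A.mulVec ((NormedSpace.exp (τ • A)).mulVec v) i) τ := by
  have h := hasDerivAt_exp_smul_const' (𝕂 := ℝ) A τ
  let L : Matrix (Fin 3) (Fin 3) ℝ →ₗ[ℝ] ℝ :=
    { toFun := fun M => M.mulVec v i,
      map_add' := fun M N => by simp [Matrix.add_mulVec],
      map_smul' := fun c M => by simp [Matrix.smul_mulVec] }
  have hL := (LinearMap.toContinuousLinearMap L).hasFDerivAt
      (x := NormedSpace.exp (τ • A))
  have h2 := hL.comp_hasDerivAt τ h
  have h3 : HasDerivAt (fun s : ℝ => (NormedSpace.exp (s • A)).mulVec v i)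
      ((A * NormedSpace.exp (τ • A)).mulVec v i) τ := h2
  rwa [← Matrix.mulVec_mulVec] at h3

end AuxExp

lemma PK_exp_zero_mulVec (A : Matrix (Fin 3) (Fin 3) ℝ) (v : Fin 3 → ℝ) :
    (NormedSpace.exp ((0:ℝ) • A)).mulVec v = v := by
  rw [zero_smul, NormedSpace.exp_zero, Matrix.one_mulVec]

lemma PK_Amat_mulVec (a₁ a₂ a₃ g₁ g₂ : ℝ) (w : Fin 3 → ℝ) :
    (Amat a₁ a₂ a₃ g₁ g₂).mulVec w =
      ![-(a₁ * w 0), g₁ * w 0 - a₂ * w 1, g₂ * w 1 - a₃ * w 2] := by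
  funext i
  fin_cases i <;>
    simp [Amat, Matrix.mulVec, dotProduct, Fin.sum_univ_three, Matrix.vecHead, Matrix.vecTail] <;> ring

lemma PK_expAux (a : ℝ) (s : ℝ) :
    HasDerivAt (fun s : ℝ => Real.exp (a * s)) (a * Real.exp (a * s)) s := by
  have := (Real.hasDerivAt_exp (a * s)).comp s ((hasDerivAt_id s).const_mul a)
  simpa [mul_comm, Function.comp_def] using this

lemma PK_comp_bound {f u : ℝ → ℝ} {a g U : ℝ} (ha : 0 < a) (hg : 0 ≤ g)
    (hf : ∀ τ, HasDerivAt f (g * u τ - a * f τ) τ)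
    (hu : ∀ τ, 0 ≤ τ → u τ ≤ U) (τ : ℝ) (hτ : 0 ≤ τ) :
    f τ ≤ Real.exp (-(a * τ)) * f 0 + (1 - Real.exp (-(a * τ))) * (g * U / a) := by
  set φ : ℝ → ℝ := fun s => f 0 + g * U / a * (Real.exp (a * s) - 1) - Real.exp (a * s) * f s
    with hφ
  have hφd' : ∀ s, HasDerivAt φ (g * Real.exp (a * s) * (U - u s)) s := by
    intro s
    have h1 := ((hasDerivAt_const s (f 0)).add
        (((PK_expAux a s).sub_const 1).const_mul (g * U / a))).sub
        ((PK_expAux a s).mul (hf s))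
    have h2 : 0 + g * U / a * (a * Real.exp (a * s))
        - (a * Real.exp (a * s) * f s + Real.exp (a * s) * (g * u s - a * f s))
        = g * Real.exp (a * s) * (U - u s) := by
      field_simp
      ring
    rwa [h2] at h1
  have hmono : MonotoneOn φ (Set.Ici (0:ℝ)) := by
    apply monotoneOn_of_deriv_nonneg (convex_Ici 0)
    · exact fun s _ => ((hφd' s).continuousAt).continuousWithinAt
    · exact fun s _ => ((hφd' s).differentiableAt).differentiableWithinAt
    · intro s hs
      rw [(hφd' s).deriv]
      have hus : u s ≤ U := hu s (le_of_lt (by simpa [interior_Ici] using hs))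
      exact mul_nonneg (mul_nonneg hg (Real.exp_pos _).le) (sub_nonneg.2 hus)
  have h0 : φ 0 ≤ φ τ := hmono Set.self_mem_Ici hτ hτ
  have hE : Real.exp (-(a * τ)) * Real.exp (a * τ) = 1 := by
    rw [← Real.exp_add]; simp
  have hEpos : 0 < Real.exp (-(a * τ)) := Real.exp_pos _
  have key : Real.exp (a * τ) * f τ ≤ f 0 + g * U / a * (Real.exp (a * τ) - 1) := by
    simp only [hφ, mul_zero, Real.exp_zero] at h0; linarith
  have hmul := mul_le_mul_of_nonneg_left key hEpos.le
  calc f τ = Real.exp (-(a * τ)) * (Real.exp (a * τ) * f τ) := by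
        rw [← mul_assoc, hE, one_mul]
    _ ≤ Real.exp (-(a * τ)) * (f 0 + g * U / a * (Real.exp (a * τ) - 1)) := hmul
    _ = Real.exp (-(a * τ)) * f 0 + (1 - Real.exp (-(a * τ))) * (g * U / a) := by
        linear_combination (g * U / a) * hE

lemma PK_chain_bound {a g U : ℝ} (ha : 0 < a) (hg : 0 ≤ g) (hU : 0 ≤ U)
    (t : ℕ → ℝ) (htm : ∀ n, t n ≤ t (n + 1))
    (w u : ℕ → ℝ → ℝ) (m : ℕ)
    (hd : ∀ n, ∀ τ, HasDerivAt (w n) (g * u n τ - a * w n τ) τ)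
    (hlink : ∀ n, m ≤ n → w (n + 1) 0 = w n (t (n + 1) - t n))
    (hu : ∀ n, m ≤ n → ∀ τ, 0 ≤ τ → u n τ ≤ U) :
    ∀ n, m ≤ n → ∀ τ, 0 ≤ τ →
      w n τ ≤ Real.exp (-(a * (τ + t n - t m))) * w m 0
        + (1 - Real.exp (-(a * (τ + t n - t m)))) * (g * U / a) := by
  intro n hn
  induction n, hn using Nat.le_induction with
  | base =>
    intro τ hτ
    have := PK_comp_bound ha hg (hd m) (hu m le_rfl) τ hτ
    have h2 : τ + t m - t m = τ := by ring
    rw [h2]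
    exact this
  | succ n hn IH =>
    intro τ hτ
    have hTn : 0 ≤ t (n + 1) - t n := by linarith [htm n]
    have h1 := PK_comp_bound ha hg (hd (n + 1)) (hu (n + 1) (by omega)) τ hτ
    rw [hlink n hn] at h1
    have h2 := IH (t (n + 1) - t n) hTn
    have h3 : t (n + 1) - t n + t n - t m = t (n + 1) - t m := by ring
    rw [h3] at h2
    set p := Real.exp (-(a * τ)) with hp
    set q := Real.exp (-(a * (t (n + 1) - t m))) with hq
    have hppos : 0 < p := Real.exp_pos _
    have hpq : p * q = Real.exp (-(a * (τ + t (n + 1) - t m))) := by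
      rw [hp, hq, ← Real.exp_add]; ring_nf
    have h4 := mul_le_mul_of_nonneg_left h2 hppos.le
    have hc : 0 ≤ g * U / a := by positivity
    calc w (n + 1) τ ≤ p * w n (t (n + 1) - t n) + (1 - p) * (g * U / a) := h1
      _ ≤ p * (q * w m 0 + (1 - q) * (g * U / a)) + (1 - p) * (g * U / a) := by linarith
      _ = (p * q) * w m 0 + (1 - p * q) * (g * U / a) := by ring
      _ = Real.exp (-(a * (τ + t (n + 1) - t m))) * w m 0
          + (1 - Real.exp (-(a * (τ + t (n + 1) - t m)))) * (g * U / a) := by rw [hpq]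

lemma PK_chain_cor {a g U : ℝ} (ha : 0 < a) (hg : 0 ≤ g) (hU : 0 ≤ U)
    (t : ℕ → ℝ) (htm : ∀ n, t n ≤ t (n + 1))
    (w u : ℕ → ℝ → ℝ) (m : ℕ)
    (hd : ∀ n, ∀ τ, HasDerivAt (w n) (g * u n τ - a * w n τ) τ)
    (hlink : ∀ n, m ≤ n → w (n + 1) 0 = w n (t (n + 1) - t n))
    (hu : ∀ n, m ≤ n → ∀ τ, 0 ≤ τ → u n τ ≤ U) :
    ∀ n, m ≤ n → ∀ τ, 0 ≤ τ →
      w n τ ≤ Real.exp (-(a * (t n - t m))) * max (w m 0) 0 + g * U / a := by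
  intro n hn τ hτ
  have h := PK_chain_bound ha hg hU t htm w u m hd hlink hu n hn τ hτ
  have hc : 0 ≤ g * U / a := by positivity
  have hE1 : Real.exp (-(a * (τ + t n - t m))) ≤ Real.exp (-(a * (t n - t m))) := by
    apply Real.exp_le_exp.mpr; nlinarith
  have hE0 : (0:ℝ) < Real.exp (-(a * (τ + t n - t m))) := Real.exp_pos _
  have hfirst : Real.exp (-(a * (τ + t n - t m))) * w m 0
      ≤ Real.exp (-(a * (t n - t m))) * max (w m 0) 0 := by
    rcases le_or_gt 0 (w m 0) with h0 | h0
    · rw [max_eq_left h0]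
      exact mul_le_mul_of_nonneg_right hE1 h0
    · have h1 : Real.exp (-(a * (τ + t n - t m))) * w m 0 ≤ 0 := by nlinarith
      have h2 : 0 ≤ Real.exp (-(a * (t n - t m))) * max (w m 0) 0 :=
        mul_nonneg (Real.exp_pos _).le (le_max_right _ _)
      linarith
  have hsecond : (1 - Real.exp (-(a * (τ + t n - t m)))) * (g * U / a) ≤ g * U / a := by
    nlinarith
  linarith

set_option maxHeartbeats 2000000 in
/-- Lemma 1, first part: if all doses are bounded above by `λ*` and all inter-dose
intervals are bounded below by `T_* > 0`, then
`limsup_{t→∞} ȳ(t) ≤ (g₁g₂/(a₂a₃)) · λ*/(1 − e^{−a₁T_*})`. -/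
theorem ultimate_upper_bound
    (a₁ a₂ a₃ g₁ g₂ : ℝ)
    (ha₁ : 0 < a₁) (ha₂ : 0 < a₂) (ha₃ : 0 < a₃) (hg₁ : 0 < g₁) (hg₂ : 0 < g₂)
    (lamStar Tstar : ℝ) (hlamStar : 0 ≤ lamStar) (hTstar : 0 < Tstar)
    (t : ℕ → ℝ) (ht : StrictMono t)
    (lam : ℕ → ℝ) (X : ℕ → Fin 3 → ℝ) (ybar : ℝ → ℝ)
    (hlam : ∀ n, 0 ≤ lam n ∧ lam n ≤ lamStar)
    (hT : ∀ n, Tstar ≤ t (n + 1) - t n)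
    (hX : ∀ n, X (n + 1) =
      (NormedSpace.exp ((t (n + 1) - t n) • Amat a₁ a₂ a₃ g₁ g₂)).mulVec
        (X n + lam n • Bvec))
    (hy : ∀ n, ∀ s ∈ Set.Ioc (t n) (t (n + 1)),
      ybar s = Cout ((NormedSpace.exp ((s - t n) • Amat a₁ a₂ a₃ g₁ g₂)).mulVec
        (X n + lam n • Bvec))) :
    Filter.limsup ybar Filter.atTop ≤
      g₁ * g₂ / (a₂ * a₃) * lamStar / (1 - Real.exp (-a₁ * Tstar)) := by
  classical
  set z : ℕ → ℝ → Fin 3 → ℝ :=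
    fun n τ => (NormedSpace.exp (τ • Amat a₁ a₂ a₃ g₁ g₂)).mulVec (X n + lam n • Bvec)
    with hzdef
  have htm : ∀ n, t n ≤ t (n + 1) := fun n => (ht (Nat.lt_succ_self n)).le
  have htmono : Monotone t := ht.monotone
  -- z n 0 components
  have hz00 : ∀ n, z n 0 = X n + lam n • Bvec := fun n => PK_exp_zero_mulVec _ _
  have hv0 : ∀ n, z n 0 0 = X n 0 + lam n := by
    intro n; rw [hz00]; simp [Bvec]
  have hv1 : ∀ n, z n 0 1 = X n 1 := by
    intro n; rw [hz00]; simp [Bvec]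
  have hv2 : ∀ n, z n 0 2 = X n 2 := by
    intro n; rw [hz00]; simp [Bvec]
  have hXz : ∀ n, X (n + 1) = z n (t (n + 1) - t n) := fun n => hX n
  -- derivatives
  have hd0 : ∀ n τ, HasDerivAt (fun τ => z n τ 0) (-(a₁ * z n τ 0)) τ := by
    intro n τ
    have h := PK_mulVec_entry_hasDerivAt (Amat a₁ a₂ a₃ g₁ g₂) (X n + lam n • Bvec) 0 τ
    rw [PK_Amat_mulVec] at h
    simpa using h
  have hd1 : ∀ n τ, HasDerivAt (fun τ => z n τ 1) (g₁ * z n τ 0 - a₂ * z n τ 1) τ := by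
    intro n τ
    have h := PK_mulVec_entry_hasDerivAt (Amat a₁ a₂ a₃ g₁ g₂) (X n + lam n • Bvec) 1 τ
    rw [PK_Amat_mulVec] at h
    simpa using h
  have hd2 : ∀ n τ, HasDerivAt (fun τ => z n τ 2) (g₂ * z n τ 1 - a₃ * z n τ 2) τ := by
    intro n τ
    have h := PK_mulVec_entry_hasDerivAt (Amat a₁ a₂ a₃ g₁ g₂) (X n + lam n • Bvec) 2 τ
    rw [PK_Amat_mulVec] at h
    simpa using h
  -- closed form for the first component
  have hclosed : ∀ n τ, z n τ 0 = Real.exp (-(a₁ * τ)) * z n 0 0 := by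
    intro n τ
    have hF : ∀ s, HasDerivAt (fun s => Real.exp (a₁ * s) * z n s 0) 0 s := by
      intro s
      have h := (PK_expAux a₁ s).mul (hd0 n s)
      have h2 : a₁ * Real.exp (a₁ * s) * z n s 0 + Real.exp (a₁ * s) * -(a₁ * z n s 0) = 0 := by
        ring
      rwa [h2] at h
    have hc := is_const_of_deriv_eq_zero (fun s => (hF s).differentiableAt)
        (fun s => (hF s).deriv) τ 0
    simp only [mul_zero, Real.exp_zero, one_mul] at hc
    have hE : Real.exp (-(a₁ * τ)) * Real.exp (a₁ * τ) = 1 := by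
      rw [← Real.exp_add]; simp
    calc z n τ 0 = Real.exp (-(a₁ * τ)) * (Real.exp (a₁ * τ) * z n τ 0) := by
          rw [← mul_assoc, hE, one_mul]
      _ = Real.exp (-(a₁ * τ)) * z n 0 0 := by rw [hc]
  have hys : ∀ n s, s ∈ Set.Ioc (t n) (t (n + 1)) → ybar s = z n (s - t n) 2 := by
    intro n s hs
    rw [hy n s hs]
    rfl
  clear_value z
  clear hX hy
  -- level 1 discrete analysis
  set κ : ℝ := Real.exp (-(a₁ * Tstar)) with hκdef
  have hκ0 : 0 < κ := Real.exp_pos _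
  have hκ1 : κ < 1 := by
    rw [hκdef]; apply Real.exp_lt_one_iff.mpr; nlinarith
  have h1κ : 0 < 1 - κ := by linarith
  set K₁ : ℝ := lamStar / (1 - κ) with hK₁def
  have hK₁ : 0 ≤ K₁ := div_nonneg hlamStar h1κ.le
  set β : ℕ → ℝ := fun n => max (z n 0 0) 0 with hβdef
  have hβnn : ∀ n, 0 ≤ β n := fun n => le_max_right _ _
  have hrec : ∀ n, z (n + 1) 0 0
      = Real.exp (-(a₁ * (t (n + 1) - t n))) * z n 0 0 + lam (n + 1) := by
    intro n
    have h1 := hv0 (n + 1)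
    have h2 := congrFun (hXz n) 0
    rw [h1, h2, hclosed n]
  have hstep : ∀ n, β (n + 1) ≤ κ * β n + lamStar := by
    intro n
    have hTs := hT n
    have hee : Real.exp (-(a₁ * (t (n + 1) - t n))) ≤ κ := by
      rw [hκdef]; apply Real.exp_le_exp.mpr; nlinarith
    have hep : 0 < Real.exp (-(a₁ * (t (n + 1) - t n))) := Real.exp_pos _
    have hlam' := hlam (n + 1)
    have hmain : z (n + 1) 0 0 ≤ κ * β n + lamStar := by
      rw [hrec n]
      rcases le_or_gt 0 (z n 0 0) with h0 | h0
      · have hb : z n 0 0 ≤ β n := le_max_left _ _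
        nlinarith [hβnn n]
      · nlinarith [hβnn n]
    exact max_le hmain (add_nonneg (mul_nonneg hκ0.le (hβnn n)) hlamStar)
  have hβb : ∀ n, β n ≤ κ ^ n * β 0 + K₁ := by
    intro n
    induction n with
    | zero =>
      have h0 : β 0 ≤ β 0 + K₁ := le_add_of_nonneg_right hK₁
      simpa using h0
    | succ n ih =>
      have h := hstep n
      have hKfix : κ * K₁ + lamStar = K₁ := by
        rw [hK₁def]; field_simp; ring
      have hmul := mul_le_mul_of_nonneg_left ih hκ0.le
      calc β (n + 1) ≤ κ * β n + lamStar := h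
        _ ≤ κ * (κ ^ n * β 0 + K₁) + lamStar := by linarith
        _ = κ ^ (n + 1) * β 0 + (κ * K₁ + lamStar) := by ring
        _ = κ ^ (n + 1) * β 0 + K₁ := by rw [hKfix]
  have hz0b : ∀ m n, m ≤ n → ∀ τ, 0 ≤ τ → z n τ 0 ≤ κ ^ m * β 0 + K₁ := by
    intro m n hmn τ hτ
    have h1 : z n τ 0 ≤ β n := by
      rw [hclosed n τ]
      have he1 : Real.exp (-(a₁ * τ)) ≤ 1 := Real.exp_le_one_iff.mpr (by nlinarith)
      rcases le_or_gt 0 (z n 0 0) with h0 | h0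
      · calc Real.exp (-(a₁ * τ)) * z n 0 0 ≤ 1 * z n 0 0 :=
            mul_le_mul_of_nonneg_right he1 h0
          _ = z n 0 0 := one_mul _
          _ ≤ β n := le_max_left _ _
      · have h2 : Real.exp (-(a₁ * τ)) * z n 0 0 ≤ 0 := by
          nlinarith [Real.exp_pos (-(a₁ * τ))]
        exact h2.trans (hβnn n)
    have h2 : κ ^ n ≤ κ ^ m := pow_le_pow_of_le_one hκ0.le hκ1.le hmn
    have h3 : 0 ≤ β 0 := hβnn 0
    nlinarith [hβb n]
  -- level 2
  have hUm : ∀ m : ℕ, 0 ≤ κ ^ m * β 0 + K₁ :=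
    fun m => add_nonneg (mul_nonneg (pow_nonneg hκ0.le m) (hβnn 0)) hK₁
  have hlink2 : ∀ n : ℕ, z (n + 1) 0 1 = z n (t (n + 1) - t n) 1 := by
    intro n
    rw [hv1 (n + 1), congrFun (hXz n) 1]
  have hlink3 : ∀ n : ℕ, z (n + 1) 0 2 = z n (t (n + 1) - t n) 2 := by
    intro n
    rw [hv2 (n + 1), congrFun (hXz n) 2]
  have hL2 : ∀ m n, m ≤ n → ∀ τ, 0 ≤ τ →
      z n τ 1 ≤ Real.exp (-(a₂ * (t n - t m))) * max (z m 0 1) 0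
        + g₁ * (κ ^ m * β 0 + K₁) / a₂ := by
    intro m
    exact PK_chain_cor ha₂ hg₁.le (hUm m) t htm (fun n τ => z n τ 1) (fun n τ => z n τ 0) m
      (fun n τ => hd1 n τ) (fun n _ => hlink2 n) (fun n hmn τ hτ => hz0b m n hmn τ hτ)
  set C₂ : ℝ := max (z 0 0 1) 0 + g₁ * (κ ^ 0 * β 0 + K₁) / a₂ with hC₂def
  have hC₂ : 0 ≤ C₂ :=
    add_nonneg (le_max_right _ _) (div_nonneg (mul_nonneg hg₁.le (hUm 0)) ha₂.le)
  have hzc2 : ∀ n τ, 0 ≤ τ → z n τ 1 ≤ C₂ := by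
    intro n τ hτ
    have h := hL2 0 n (Nat.zero_le n) τ hτ
    have ht0 : t 0 ≤ t n := htmono (Nat.zero_le n)
    have he1 : Real.exp (-(a₂ * (t n - t 0))) ≤ 1 := Real.exp_le_one_iff.mpr (by nlinarith)
    have hm0 : (0:ℝ) ≤ max (z 0 0 1) 0 := le_max_right _ _
    have he0 : (0:ℝ) < Real.exp (-(a₂ * (t n - t 0))) := Real.exp_pos _
    rw [hC₂def]
    nlinarith
  have hmax2 : ∀ m', max (z m' 0 1) 0 ≤ C₂ :=
    fun m' => max_le (hzc2 m' 0 le_rfl) hC₂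
  -- level 3
  have hU₂nn : ∀ m m' : ℕ, 0 ≤ Real.exp (-(a₂ * (t m' - t m))) * C₂
      + g₁ * (κ ^ m * β 0 + K₁) / a₂ := by
    intro m m'
    exact add_nonneg (mul_nonneg (Real.exp_pos _).le hC₂)
      (div_nonneg (mul_nonneg hg₁.le (hUm m)) ha₂.le)
  have hL3 : ∀ m m', m ≤ m' → ∀ n, m' ≤ n → ∀ τ, 0 ≤ τ →
      z n τ 2 ≤ Real.exp (-(a₃ * (t n - t m'))) * max (z m' 0 2) 0
        + g₂ * (Real.exp (-(a₂ * (t m' - t m))) * C₂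
          + g₁ * (κ ^ m * β 0 + K₁) / a₂) / a₃ := by
    intro m m' hmm'
    apply PK_chain_cor ha₃ hg₂.le (hU₂nn m m') t htm (fun n τ => z n τ 2) (fun n τ => z n τ 1)
      m' (fun n τ => hd2 n τ) (fun n _ => hlink3 n)
    intro n hn τ hτ
    have h := hL2 m n (hmm'.trans hn) τ hτ
    have htn : t m' ≤ t n := htmono hn
    have h2 : Real.exp (-(a₂ * (t n - t m))) * max (z m 0 1) 0
        ≤ Real.exp (-(a₂ * (t m' - t m))) * C₂ := by
      apply mul_le_mul (Real.exp_le_exp.mpr (by nlinarith)) (hmax2 m) (le_max_right _ _)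
        (Real.exp_pos _).le
    exact h.trans (add_le_add_left h2 _)
  set C₃ : ℝ := max (z 0 0 2) 0 + g₂ * (Real.exp (-(a₂ * (t 0 - t 0))) * C₂
      + g₁ * (κ ^ 0 * β 0 + K₁) / a₂) / a₃ with hC₃def
  have hC₃ : 0 ≤ C₃ :=
    add_nonneg (le_max_right _ _) (div_nonneg (mul_nonneg hg₂.le (hU₂nn 0 0)) ha₃.le)
  have hmax3 : ∀ m', max (z m' 0 2) 0 ≤ C₃ := by
    intro m'
    have h := hL3 0 0 le_rfl m' (Nat.zero_le m') 0 le_rfl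
    have ht0 : t 0 ≤ t m' := htmono (Nat.zero_le m')
    have he1 : Real.exp (-(a₃ * (t m' - t 0))) ≤ 1 := Real.exp_le_one_iff.mpr (by nlinarith)
    have hm0 : (0:ℝ) ≤ max (z 0 0 2) 0 := le_max_right _ _
    have he0 : (0:ℝ) < Real.exp (-(a₃ * (t m' - t 0))) := Real.exp_pos _
    apply max_le _ hC₃
    rw [hC₃def]
    have h1 : Real.exp (-(a₃ * (t m' - t 0))) * (z 0 0 2 ⊔ 0) ≤ 1 * (z 0 0 2 ⊔ 0) :=
      mul_le_mul_of_nonneg_right he1 hm0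
    linarith
  -- final pointwise bound
  have hfin : ∀ m m' n, m ≤ m' → m' ≤ n → ∀ s, s ∈ Set.Ioc (t n) (t (n + 1)) →
      ybar s ≤ Real.exp (-(a₃ * (t n - t m'))) * C₃
        + g₂ * (Real.exp (-(a₂ * (t m' - t m))) * C₂
          + g₁ * (κ ^ m * β 0 + K₁) / a₂) / a₃ := by
    intro m m' n hmm' hm'n s hs
    have hτ : 0 ≤ s - t n := by
      have := hs.1; linarith
    have h := hL3 m m' hmm' n hm'n (s - t n) hτ
    rw [hys n s hs]
    have h2 : Real.exp (-(a₃ * (t n - t m'))) * (z m' 0 2 ⊔ 0)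
        ≤ Real.exp (-(a₃ * (t n - t m'))) * C₃ :=
      mul_le_mul_of_nonneg_left (hmax3 m') (Real.exp_pos _).le
    exact h.trans (add_le_add_left h2 _)
  -- growth and divergence of the firing times
  have hgrow : ∀ n : ℕ, t 0 + n * Tstar ≤ t n := by
    intro n
    induction n with
    | zero => simp
    | succ n ih =>
      have := hT n
      push_cast
      push_cast at ih
      linarith
  have htop : Filter.Tendsto t Filter.atTop Filter.atTop := by
    apply Filter.tendsto_atTop_mono hgrow
    apply Filter.tendsto_atTop_add_const_left
    exact Filter.Tendsto.atTop_mul_const hTstar tendsto_natCast_atTop_atTop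
  set Ktar : ℝ := g₁ * g₂ / (a₂ * a₃) * lamStar / (1 - κ) with hKtardef
  have hKtar : 0 ≤ Ktar := by
    apply div_nonneg _ h1κ.le
    positivity
  have key : ∀ ε : ℝ, 0 < ε → ∀ᶠ s in Filter.atTop, ybar s ≤ Ktar + ε := by
    intro ε hε
    have hε3 : 0 < ε / 3 := by linarith
    have hmt : Filter.Tendsto (fun m : ℕ => g₁ * g₂ / (a₂ * a₃) * β 0 * κ ^ m)
        Filter.atTop (nhds 0) := by
      have h := tendsto_pow_atTop_nhds_zero_of_lt_one hκ0.le hκ1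
      have h2 := h.const_mul (g₁ * g₂ / (a₂ * a₃) * β 0)
      rw [mul_zero] at h2
      exact h2
    obtain ⟨m, hm⟩ := (hmt.eventually_lt_const hε3).exists
    have h2t : Filter.Tendsto (fun j : ℕ => g₂ * C₂ / a₃ * Real.exp (-(a₂ * (t j - t m))))
        Filter.atTop (nhds 0) := by
      have h1 : Filter.Tendsto (fun j : ℕ => t j - t m) Filter.atTop Filter.atTop := by
        have hx := Filter.tendsto_atTop_add_const_right Filter.atTop (-(t m)) htop
        simp only [← sub_eq_add_neg] at hx
        exact hx
      have h2 : Filter.Tendsto (fun j : ℕ => a₂ * (t j - t m)) Filter.atTop Filter.atTop :=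
        h1.const_mul_atTop ha₂
      have h3 : Filter.Tendsto (fun j : ℕ => -(a₂ * (t j - t m))) Filter.atTop Filter.atBot :=
        Filter.tendsto_neg_atTop_atBot.comp h2
      have h4 := Real.tendsto_exp_atBot.comp h3
      have h5 := h4.const_mul (g₂ * C₂ / a₃)
      simp only [Function.comp_def, mul_zero] at h5
      exact h5
    obtain ⟨m', hm'1, hm'2⟩ :=
      ((h2t.eventually_lt_const hε3).and (Filter.eventually_ge_atTop m)).exists
    have h3t : Filter.Tendsto (fun n : ℕ => Real.exp (-(a₃ * (t n - t m'))) * C₃)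
        Filter.atTop (nhds 0) := by
      have h1 : Filter.Tendsto (fun j : ℕ => t j - t m') Filter.atTop Filter.atTop := by
        have hx := Filter.tendsto_atTop_add_const_right Filter.atTop (-(t m')) htop
        simp only [← sub_eq_add_neg] at hx
        exact hx
      have h2 : Filter.Tendsto (fun j : ℕ => a₃ * (t j - t m')) Filter.atTop Filter.atTop :=
        h1.const_mul_atTop ha₃
      have h3 : Filter.Tendsto (fun j : ℕ => -(a₃ * (t j - t m'))) Filter.atTop Filter.atBot :=
        Filter.tendsto_neg_atTop_atBot.comp h2
      have h4 := Real.tendsto_exp_atBot.comp h3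
      have h5 := h4.mul_const C₃
      simp only [Function.comp_def, zero_mul] at h5
      exact h5
    obtain ⟨n₀, hn₀⟩ := Filter.eventually_atTop.mp
      ((h3t.eventually_lt_const hε3).and (Filter.eventually_ge_atTop m'))
    refine Filter.eventually_atTop.mpr ⟨t n₀ + 1, fun s hs => ?_⟩
    have hsgt : t n₀ < s := by linarith
    have hex : ∃ j, s ≤ t j := (htop.eventually_ge_atTop s).exists
    obtain ⟨j, hj, hjmin⟩ : ∃ j, s ≤ t j ∧ ∀ k < j, ¬ s ≤ t k :=
      ⟨Nat.find hex, Nat.find_spec hex, fun k hk => Nat.find_min hex hk⟩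
    have hjgt : n₀ < j := by
      by_contra hcon
      push_neg at hcon
      exact absurd (le_trans hj (htmono hcon)) (not_le.mpr hsgt)
    obtain ⟨n, rfl⟩ : ∃ n, j = n + 1 := ⟨j - 1, by omega⟩
    have htn : t n < s := not_le.mp (hjmin n (by omega))
    have hn₀n : n₀ ≤ n := by omega
    obtain ⟨he3, hm'n⟩ := hn₀ n hn₀n
    have hmem : s ∈ Set.Ioc (t n) (t (n + 1)) := ⟨htn, hj⟩
    have hb := hfin m m' n hm'2 hm'n s hmem
    have hsplit : g₂ * (Real.exp (-(a₂ * (t m' - t m))) * C₂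
          + g₁ * (κ ^ m * β 0 + K₁) / a₂) / a₃
        = g₂ * C₂ / a₃ * Real.exp (-(a₂ * (t m' - t m)))
          + g₁ * g₂ / (a₂ * a₃) * β 0 * κ ^ m + Ktar := by
      rw [hKtardef, hK₁def]
      field_simp
      ring
    rw [hsplit] at hb
    linarith
  have hgoal : Filter.limsup ybar Filter.atTop ≤ Ktar := by
    rw [Filter.limsup_eq]
    by_cases hbd : BddBelow {a : ℝ | ∀ᶠ s in Filter.atTop, ybar s ≤ a}
    · by_contra hcon
      push_neg at hcon
      set S : Set ℝ := {a : ℝ | ∀ᶠ s in Filter.atTop, ybar s ≤ a} with hSdef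
      have hε : 0 < (sInf S - Ktar) / 2 := by linarith
      have hmem2 : Ktar + (sInf S - Ktar) / 2 ∈ S := key _ hε
      have := csInf_le hbd hmem2
      linarith
    · rw [Real.sInf_of_not_bddBelow hbd]
      exact hKtar
  have hfinalrw : Real.exp (-a₁ * Tstar) = κ := by rw [hκdef, neg_mul]
  rw [hfinalrw]
  exact hgoal
end

section
/- Let 0 < ȳ_min < ȳ_max, λ ≥ 0 and T > 0, and suppose that ȳ_min ≤ λ ξ_T(τ) ≤ ȳ_max for all τ ∈ [0, T] (i.e., the output of the 1-cycle with dose λ and period T stays in the prescribed corridor). Then (a₂a₃/(g₁g₂)) · ȳ_min · (1 − e^{−a₁T}) ≤ λ ≤ (a₂a₃/(g₁g₂)) · ȳ_max · (e^{a₁T} − 1). -/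
open Matrix

/-- `ξ_T(τ) = C e^{τA} (I − e^{TA})⁻¹ B`, the output at phase `τ` of the 1-cycle
with unit dose and inter-dose interval `T`. -/
noncomputable def xi (a₁ a₂ a₃ g₁ g₂ : ℝ) (T τ : ℝ) : ℝ :=
  Cout ((NormedSpace.exp (τ • Amat a₁ a₂ a₃ g₁ g₂) *
    (1 - NormedSpace.exp (T • Amat a₁ a₂ a₃ g₁ g₂))⁻¹).mulVec Bvec)

/-! ### Auxiliary scalar functions: the entries of `e^{tA}` -/

noncomputable def fF (a₁ a₂ g₁ : ℝ) (t : ℝ) : ℝ :=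
  g₁ * Real.exp (-a₂*t) * ∫ s in (0:ℝ)..t, Real.exp ((a₂-a₁)*s)
noncomputable def kF (a₂ a₃ g₂ : ℝ) (t : ℝ) : ℝ :=
  g₂ * Real.exp (-a₃*t) * ∫ s in (0:ℝ)..t, Real.exp ((a₃-a₂)*s)
noncomputable def hF (a₁ a₂ a₃ g₁ g₂ : ℝ) (t : ℝ) : ℝ :=
  g₂ * Real.exp (-a₃*t) * ∫ s in (0:ℝ)..t, Real.exp (a₃*s) * fF a₁ a₂ g₁ s

noncomputable def Emat (a₁ a₂ a₃ g₁ g₂ : ℝ) (t : ℝ) : Matrix (Fin 3) (Fin 3) ℝ :=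
  !![Real.exp (-a₁*t), 0, 0;
     fF a₁ a₂ g₁ t, Real.exp (-a₂*t), 0;
     hF a₁ a₂ a₃ g₁ g₂ t, kF a₂ a₃ g₂ t, Real.exp (-a₃*t)]

lemma cont_exp_mul (c : ℝ) : Continuous (fun x => Real.exp (c*x)) :=
  Real.continuous_exp.comp (continuous_const.mul continuous_id)

lemma hasDerivAt_exp_mul (c t : ℝ) : HasDerivAt (fun x => Real.exp (c*x)) (c * Real.exp (c*t)) t := by
  simpa [mul_comm, Function.comp_def] using (Real.hasDerivAt_exp (c*t)).comp t ((hasDerivAt_id t).const_mul c)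

lemma integral_exp_mul {c : ℝ} (hc : c ≠ 0) (a b : ℝ) :
    ∫ x in a..b, Real.exp (c*x) = (Real.exp (c*b) - Real.exp (c*a))/c := by
  have := intervalIntegral.integral_eq_sub_of_hasDerivAt
    (f := fun x => Real.exp (c*x)/c) (f' := fun x => Real.exp (c*x))
    (fun x _ => by simpa [mul_div_assoc, mul_div_cancel_left₀ _ hc] using (hasDerivAt_exp_mul c x).div_const c)
    ((cont_exp_mul c).intervalIntegrable a b)
  rw [this]; ring

lemma primitive_hasDerivAt {g : ℝ → ℝ} (hg : Continuous g) (t : ℝ) :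
    HasDerivAt (fun u => ∫ s in (0:ℝ)..u, g s) (g t) t :=
  intervalIntegral.integral_hasDerivAt_right (hg.intervalIntegrable 0 t)
    (hg.stronglyMeasurable.stronglyMeasurableAtFilter) hg.continuousAt

lemma hasDerivAt_fF (a₁ a₂ g₁ t : ℝ) :
    HasDerivAt (fF a₁ a₂ g₁) (g₁ * Real.exp (-a₁*t) - a₂ * fF a₁ a₂ g₁ t) t := by
  have h1 : HasDerivAt (fun u => Real.exp (-a₂*u)) (-a₂ * Real.exp (-a₂*t)) t := hasDerivAt_exp_mul _ t
  have h2 := primitive_hasDerivAt (cont_exp_mul (a₂-a₁)) t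
  have := ((h1.const_mul g₁).mul h2)
  convert (show HasDerivAt (fF a₁ a₂ g₁) _ t from this) using 1
  unfold fF
  have : Real.exp (-a₂*t) * Real.exp ((a₂-a₁)*t) = Real.exp (-a₁*t) := by
    rw [← Real.exp_add]; ring_nf
  linear_combination -g₁ * this

lemma continuous_fF (a₁ a₂ g₁ : ℝ) : Continuous (fF a₁ a₂ g₁) := by
  have : Differentiable ℝ (fF a₁ a₂ g₁) := fun t => (hasDerivAt_fF a₁ a₂ g₁ t).differentiableAt
  exact this.continuous

lemma hasDerivAt_kF (a₂ a₃ g₂ t : ℝ) :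
    HasDerivAt (kF a₂ a₃ g₂) (g₂ * Real.exp (-a₂*t) - a₃ * kF a₂ a₃ g₂ t) t := by
  have h1 : HasDerivAt (fun u => Real.exp (-a₃*u)) (-a₃ * Real.exp (-a₃*t)) t := hasDerivAt_exp_mul _ t
  have h2 := primitive_hasDerivAt (cont_exp_mul (a₃-a₂)) t
  have := ((h1.const_mul g₂).mul h2)
  convert (show HasDerivAt (kF a₂ a₃ g₂) _ t from this) using 1
  unfold kF
  have : Real.exp (-a₃*t) * Real.exp ((a₃-a₂)*t) = Real.exp (-a₂*t) := by
    rw [← Real.exp_add]; ring_nf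
  linear_combination -g₂ * this

lemma hasDerivAt_hF (a₁ a₂ a₃ g₁ g₂ t : ℝ) :
    HasDerivAt (hF a₁ a₂ a₃ g₁ g₂) (g₂ * fF a₁ a₂ g₁ t - a₃ * hF a₁ a₂ a₃ g₁ g₂ t) t := by
  have h1 : HasDerivAt (fun u => Real.exp (-a₃*u)) (-a₃ * Real.exp (-a₃*t)) t := hasDerivAt_exp_mul _ t
  have h2 := primitive_hasDerivAt ((cont_exp_mul a₃).mul (continuous_fF a₁ a₂ g₁)) t
  have := ((h1.const_mul g₂).mul h2)
  convert (show HasDerivAt (hF a₁ a₂ a₃ g₁ g₂) _ t from this) using 1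
  unfold hF
  have : Real.exp (-a₃*t) * Real.exp (a₃*t) = 1 := by
    rw [← Real.exp_add]; ring_nf; exact Real.exp_zero
  simp only [Pi.mul_apply]
  linear_combination -g₂ * fF a₁ a₂ g₁ t * this

/-! ### Identification of the matrix exponential -/

section ExpId

attribute [local instance] Matrix.linftyOpNormedRing Matrix.linftyOpNormedAlgebra

noncomputable def Sbm (i j : Fin 3) : Matrix (Fin 3) (Fin 3) ℝ := Matrix.single i j 1

lemma tri_eq_sum (a b c d e f : ℝ) :
    (!![a, 0, 0; b, c, 0; d, e, f] : Matrix (Fin 3) (Fin 3) ℝ)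
      = a • Sbm 0 0 + b • Sbm 1 0 + c • Sbm 1 1 + d • Sbm 2 0 + e • Sbm 2 1 + f • Sbm 2 2 := by
  ext i j
  fin_cases i <;> fin_cases j <;> simp [Sbm, Matrix.single]

lemma hasDerivAt_Emat (a₁ a₂ a₃ g₁ g₂ t : ℝ) :
    HasDerivAt (Emat a₁ a₂ a₃ g₁ g₂)
      (Amat a₁ a₂ a₃ g₁ g₂ * Emat a₁ a₂ a₃ g₁ g₂ t) t := by
  have key : HasDerivAt (Emat a₁ a₂ a₃ g₁ g₂)
      (!![-a₁ * Real.exp (-a₁*t), 0, 0;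
          g₁ * Real.exp (-a₁*t) - a₂ * fF a₁ a₂ g₁ t, -a₂ * Real.exp (-a₂*t), 0;
          g₂ * fF a₁ a₂ g₁ t - a₃ * hF a₁ a₂ a₃ g₁ g₂ t,
            g₂ * Real.exp (-a₂*t) - a₃ * kF a₂ a₃ g₂ t, -a₃ * Real.exp (-a₃*t)]) t := by
    have e1 := hasDerivAt_exp_mul (-a₁) t
    have e2 := hasDerivAt_exp_mul (-a₂) t
    have e3 := hasDerivAt_exp_mul (-a₃) t
    have hf := hasDerivAt_fF a₁ a₂ g₁ t
    have hk := hasDerivAt_kF a₂ a₃ g₂ t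
    have hh := hasDerivAt_hF a₁ a₂ a₃ g₁ g₂ t
    have : HasDerivAt (fun u => Emat a₁ a₂ a₃ g₁ g₂ u)
        ((-a₁ * Real.exp (-a₁*t)) • Sbm 0 0
          + (g₁ * Real.exp (-a₁*t) - a₂ * fF a₁ a₂ g₁ t) • Sbm 1 0
          + (-a₂ * Real.exp (-a₂*t)) • Sbm 1 1
          + (g₂ * fF a₁ a₂ g₁ t - a₃ * hF a₁ a₂ a₃ g₁ g₂ t) • Sbm 2 0
          + (g₂ * Real.exp (-a₂*t) - a₃ * kF a₂ a₃ g₂ t) • Sbm 2 1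
          + (-a₃ * Real.exp (-a₃*t)) • Sbm 2 2) t := by
      simp only [Emat, tri_eq_sum]
      exact (((((e1.smul_const _).add (hf.smul_const _)).add (e2.smul_const _)).add
        (hh.smul_const _)).add (hk.smul_const _)).add (e3.smul_const _)
    rw [tri_eq_sum]
    exact this
  convert key using 1
  show Amat a₁ a₂ a₃ g₁ g₂ * Emat a₁ a₂ a₃ g₁ g₂ t = _
  rw [Amat, Emat, Matrix.mul_fin_three]
  congr 1 <;> ring

lemma Emat_zero (a₁ a₂ a₃ g₁ g₂ : ℝ) : Emat a₁ a₂ a₃ g₁ g₂ 0 = 1 := by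
  ext i j
  fin_cases i <;> fin_cases j <;>
    simp [Emat, fF, kF, hF, Matrix.one_apply, Matrix.vecHead, Matrix.vecTail]

lemma exp_smul_eq_Emat (a₁ a₂ a₃ g₁ g₂ t : ℝ) :
    NormedSpace.exp (t • Amat a₁ a₂ a₃ g₁ g₂) = Emat a₁ a₂ a₃ g₁ g₂ t := by
  set A := Amat a₁ a₂ a₃ g₁ g₂ with hA
  set E := Emat a₁ a₂ a₃ g₁ g₂ with hE
  have hG : ∀ u : ℝ, HasDerivAt (fun u => NormedSpace.exp ((-u) • A) * E u) 0 u := by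
    intro u
    have hu : HasDerivAt (fun u : ℝ => NormedSpace.exp ((-u) • A))
        ((-1 : ℝ) • (NormedSpace.exp ((-u) • A) * A)) u :=
      HasDerivAt.scomp u (hasDerivAt_exp_smul_const A (-u)) (hasDerivAt_neg u)
    have := hu.mul (hasDerivAt_Emat a₁ a₂ a₃ g₁ g₂ u)
    convert (show HasDerivAt (fun u => NormedSpace.exp ((-u) • A) * E u) _ u from this) using 1
    rw [neg_one_smul, neg_mul, mul_assoc]
    abel
  have hconst : ∀ u : ℝ, NormedSpace.exp ((-u) • A) * E u
      = NormedSpace.exp ((-(0:ℝ)) • A) * E 0 := by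
    intro u
    exact is_const_of_deriv_eq_zero (fun x => (hG x).differentiableAt)
      (fun x => (hG x).deriv) u 0
  have h0 : NormedSpace.exp ((-(0:ℝ)) • A) * E 0 = 1 := by
    rw [hE, Emat_zero]
    simp [NormedSpace.exp_zero]
  have hinv : NormedSpace.exp (t • A) * NormedSpace.exp ((-t) • A) = 1 := by
    refine (NormedSpace.exp_add_of_commute ?_).symm.trans ?_
    · exact (Commute.refl A).smul_left _ |>.smul_right _
    · simp [NormedSpace.exp_zero]
  calc NormedSpace.exp (t • A)
      = NormedSpace.exp (t • A) * (NormedSpace.exp ((-t) • A) * E t) := by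
        rw [hconst t, h0, mul_one]
    _ = (NormedSpace.exp (t • A) * NormedSpace.exp ((-t) • A)) * E t := by
        rw [mul_assoc]
    _ = E t := by rw [hinv, one_mul]

end ExpId

/-! ### The value `ξ_T(0)` -/

set_option maxHeartbeats 1000000 in
lemma xi_zero_eq (a₁ a₂ a₃ g₁ g₂ T : ℝ)
    (ha₁ : 0 < a₁) (ha₂ : 0 < a₂) (ha₃ : 0 < a₃) (hT : 0 < T) :
    xi a₁ a₂ a₃ g₁ g₂ T 0 =
      (fF a₁ a₂ g₁ T * kF a₂ a₃ g₂ T + (1 - Real.exp (-a₂*T)) * hF a₁ a₂ a₃ g₁ g₂ T) /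
        ((1 - Real.exp (-a₁*T)) * (1 - Real.exp (-a₂*T)) * (1 - Real.exp (-a₃*T))) := by
  have hd : ∀ a : ℝ, 0 < a → (0:ℝ) < 1 - Real.exp (-a*T) := by
    intro a ha
    have : Real.exp (-a*T) < 1 := by
      rw [Real.exp_lt_one_iff]; nlinarith
    linarith
  have hd₁ := hd a₁ ha₁; have hd₂ := hd a₂ ha₂; have hd₃ := hd a₃ ha₃
  set f := fF a₁ a₂ g₁ T
  set k := kF a₂ a₃ g₂ T
  set h := hF a₁ a₂ a₃ g₁ g₂ T
  set d₁ := 1 - Real.exp (-a₁*T)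
  set d₂ := 1 - Real.exp (-a₂*T)
  set d₃ := 1 - Real.exp (-a₃*T)
  have hM : (1 : Matrix (Fin 3) (Fin 3) ℝ) - Emat a₁ a₂ a₃ g₁ g₂ T
      = !![d₁, 0, 0; -f, d₂, 0; -h, -k, d₃] := by
    ext i j
    fin_cases i <;> fin_cases j <;>
      simp [Emat, Matrix.one_apply, Matrix.vecHead, Matrix.vecTail, d₁, d₂, d₃, f, k, h]
  have hMN : (!![d₁, 0, 0; -f, d₂, 0; -h, -k, d₃] : Matrix (Fin 3) (Fin 3) ℝ) *
      !![1/d₁, 0, 0; f/(d₁*d₂), 1/d₂, 0; (f*k + d₂*h)/(d₁*d₂*d₃), k/(d₂*d₃), 1/d₃] = 1 := by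
    rw [Matrix.mul_fin_three]
    ext i j
    fin_cases i <;> fin_cases j <;>
      simp [Matrix.one_apply, Matrix.vecHead, Matrix.vecTail] <;>
      field_simp <;> ring
  have hinv : ((1 : Matrix (Fin 3) (Fin 3) ℝ) - Emat a₁ a₂ a₃ g₁ g₂ T)⁻¹
      = !![1/d₁, 0, 0; f/(d₁*d₂), 1/d₂, 0; (f*k + d₂*h)/(d₁*d₂*d₃), k/(d₂*d₃), 1/d₃] := by
    rw [hM]
    exact Matrix.inv_eq_right_inv hMN
  unfold xi Cout
  rw [exp_smul_eq_Emat, exp_smul_eq_Emat]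
  have hE0 : Emat a₁ a₂ a₃ g₁ g₂ 0 = 1 := by
    ext i j
    fin_cases i <;> fin_cases j <;>
      simp [Emat, fF, kF, hF, Matrix.one_apply, Matrix.vecHead, Matrix.vecTail]
  rw [hE0, one_mul, hinv]
  show Matrix.mulVec _ Bvec 2 = _
  simp [Matrix.mulVec, dotProduct, Bvec, Fin.sum_univ_three, Matrix.vecHead, Matrix.vecTail]

/-! ### Bounds -/

lemma exp_mul_exp (x y : ℝ) : Real.exp x * Real.exp y = Real.exp (x+y) := (Real.exp_add x y).symm

lemma exp_flip (a s : ℝ) : Real.exp (-a*s) * (Real.exp (a*s) - 1) = 1 - Real.exp (-a*s) := by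
  have hprod : Real.exp (-a*s) * Real.exp (a*s) = 1 := by
    rw [exp_mul_exp]; norm_num
  linear_combination hprod

lemma fF_le {a₁ a₂ g₁ s : ℝ} (ha₁ : 0 ≤ a₁) (ha₂ : 0 < a₂) (hg₁ : 0 ≤ g₁) (hs : 0 ≤ s) :
    fF a₁ a₂ g₁ s ≤ g₁/a₂ * (1 - Real.exp (-a₂*s)) := by
  have hmono : (∫ u in (0:ℝ)..s, Real.exp ((a₂-a₁)*u)) ≤ ∫ u in (0:ℝ)..s, Real.exp (a₂*u) := by
    apply intervalIntegral.integral_mono_on hs ((cont_exp_mul _).intervalIntegrable _ _)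
      ((cont_exp_mul _).intervalIntegrable _ _)
    intro u hu
    apply Real.exp_le_exp.2
    nlinarith [hu.1]
  have hval : (∫ u in (0:ℝ)..s, Real.exp (a₂*u)) = (Real.exp (a₂*s) - 1)/a₂ := by
    rw [integral_exp_mul ha₂.ne', mul_zero, Real.exp_zero]
  have h1 : fF a₁ a₂ g₁ s ≤ g₁ * Real.exp (-a₂*s) * ((Real.exp (a₂*s) - 1)/a₂) := by
    rw [fF, ← hval]
    exact mul_le_mul_of_nonneg_left hmono (by positivity)
  calc fF a₁ a₂ g₁ s ≤ g₁ * Real.exp (-a₂*s) * ((Real.exp (a₂*s) - 1)/a₂) := h1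
    _ = g₁/a₂ * (Real.exp (-a₂*s) * (Real.exp (a₂*s) - 1)) := by ring
    _ = g₁/a₂ * (1 - Real.exp (-a₂*s)) := by rw [exp_flip]

lemma fF_ge {a₁ a₂ g₁ T s : ℝ} (ha₁ : 0 ≤ a₁) (ha₂ : 0 < a₂) (hg₁ : 0 ≤ g₁)
    (hs : 0 ≤ s) (hsT : s ≤ T) :
    g₁/a₂ * Real.exp (-a₁*T) * (1 - Real.exp (-a₂*s)) ≤ fF a₁ a₂ g₁ s := by
  have hmono : (∫ u in (0:ℝ)..s, Real.exp (-a₁*T) * Real.exp (a₂*u))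
      ≤ ∫ u in (0:ℝ)..s, Real.exp ((a₂-a₁)*u) := by
    apply intervalIntegral.integral_mono_on hs
      ((continuous_const.mul (cont_exp_mul _)).intervalIntegrable _ _)
      ((cont_exp_mul _).intervalIntegrable _ _)
    intro u hu
    show Real.exp (-a₁*T) * Real.exp (a₂*u) ≤ _
    rw [exp_mul_exp]
    apply Real.exp_le_exp.2
    nlinarith [hu.1, hu.2]
  have hval : (∫ u in (0:ℝ)..s, Real.exp (-a₁*T) * Real.exp (a₂*u))
      = Real.exp (-a₁*T) * ((Real.exp (a₂*s) - 1)/a₂) := by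
    rw [intervalIntegral.integral_const_mul, integral_exp_mul ha₂.ne', mul_zero, Real.exp_zero]
  have h1 : g₁ * Real.exp (-a₂*s) * (Real.exp (-a₁*T) * ((Real.exp (a₂*s) - 1)/a₂))
      ≤ fF a₁ a₂ g₁ s := by
    rw [fF, ← hval]
    exact mul_le_mul_of_nonneg_left hmono (by positivity)
  calc g₁/a₂ * Real.exp (-a₁*T) * (1 - Real.exp (-a₂*s))
      = g₁/a₂ * Real.exp (-a₁*T) * (Real.exp (-a₂*s) * (Real.exp (a₂*s) - 1)) := by rw [exp_flip]
    _ = g₁ * Real.exp (-a₂*s) * (Real.exp (-a₁*T) * ((Real.exp (a₂*s) - 1)/a₂)) := by ring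
    _ ≤ fF a₁ a₂ g₁ s := h1

lemma kF_nonneg {a₂ a₃ g₂ T : ℝ} (hg₂ : 0 ≤ g₂) (hT : 0 ≤ T) : 0 ≤ kF a₂ a₃ g₂ T := by
  have : 0 ≤ ∫ s in (0:ℝ)..T, Real.exp ((a₃-a₂)*s) :=
    intervalIntegral.integral_nonneg hT (fun u _ => (Real.exp_pos _).le)
  rw [kF]; positivity

lemma comb_le {a₁ a₂ a₃ g₁ g₂ T : ℝ} (ha₁ : 0 < a₁) (ha₂ : 0 < a₂) (ha₃ : 0 < a₃)
    (hg₁ : 0 < g₁) (hg₂ : 0 < g₂) (hT : 0 < T) :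
    g₁/a₂ * kF a₂ a₃ g₂ T + hF a₁ a₂ a₃ g₁ g₂ T
      ≤ g₁*g₂/(a₂*a₃) * (1 - Real.exp (-a₃*T)) := by
  have hint1 : IntervalIntegrable (fun s => g₁/a₂ * Real.exp ((a₃-a₂)*s)) MeasureTheory.volume 0 T :=
    (continuous_const.mul (cont_exp_mul _)).intervalIntegrable _ _
  have hint2 : IntervalIntegrable (fun s => Real.exp (a₃*s) * fF a₁ a₂ g₁ s) MeasureTheory.volume 0 T :=
    ((cont_exp_mul _).mul (continuous_fF a₁ a₂ g₁)).intervalIntegrable _ _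
  have hmono : (∫ s in (0:ℝ)..T, (g₁/a₂ * Real.exp ((a₃-a₂)*s) + Real.exp (a₃*s) * fF a₁ a₂ g₁ s))
      ≤ ∫ s in (0:ℝ)..T, g₁/a₂ * Real.exp (a₃*s) := by
    apply intervalIntegral.integral_mono_on hT.le (hint1.add hint2)
      ((continuous_const.mul (cont_exp_mul _)).intervalIntegrable _ _)
    intro s hs
    have hf := fF_le ha₁.le ha₂ hg₁.le hs.1
    have hp : Real.exp (a₃*s) * Real.exp (-a₂*s) = Real.exp ((a₃-a₂)*s) := by
      rw [exp_mul_exp]; ring_nf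
    have h2 := mul_le_mul_of_nonneg_left hf (Real.exp_nonneg (a₃*s))
    have h3 : Real.exp (a₃*s) * (g₁/a₂ * (1 - Real.exp (-a₂*s)))
        = g₁/a₂ * Real.exp (a₃*s) - g₁/a₂ * Real.exp ((a₃-a₂)*s) := by
      linear_combination (-(g₁/a₂)) * hp
    show _ ≤ g₁/a₂ * Real.exp (a₃*s)
    linarith
  have hsplit : (∫ s in (0:ℝ)..T, (g₁/a₂ * Real.exp ((a₃-a₂)*s) + Real.exp (a₃*s) * fF a₁ a₂ g₁ s))
      = g₁/a₂ * (∫ s in (0:ℝ)..T, Real.exp ((a₃-a₂)*s)) + ∫ s in (0:ℝ)..T, Real.exp (a₃*s) * fF a₁ a₂ g₁ s := by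
    rw [intervalIntegral.integral_add hint1 hint2, intervalIntegral.integral_const_mul]
  have hval : (∫ s in (0:ℝ)..T, g₁/a₂ * Real.exp (a₃*s)) = g₁/a₂ * ((Real.exp (a₃*T) - 1)/a₃) := by
    rw [intervalIntegral.integral_const_mul, integral_exp_mul ha₃.ne', mul_zero, Real.exp_zero]
  have key : g₁/a₂ * (∫ s in (0:ℝ)..T, Real.exp ((a₃-a₂)*s)) + (∫ s in (0:ℝ)..T, Real.exp (a₃*s) * fF a₁ a₂ g₁ s)
      ≤ g₁/a₂ * ((Real.exp (a₃*T) - 1)/a₃) := by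
    rw [← hval, ← hsplit]; exact hmono
  have hmul := mul_le_mul_of_nonneg_left key (by positivity : (0:ℝ) ≤ g₂ * Real.exp (-a₃*T))
  calc g₁/a₂ * kF a₂ a₃ g₂ T + hF a₁ a₂ a₃ g₁ g₂ T
      = g₂ * Real.exp (-a₃*T) * (g₁/a₂ * (∫ s in (0:ℝ)..T, Real.exp ((a₃-a₂)*s))
          + ∫ s in (0:ℝ)..T, Real.exp (a₃*s) * fF a₁ a₂ g₁ s) := by
        rw [kF, hF]; ring
    _ ≤ g₂ * Real.exp (-a₃*T) * (g₁/a₂ * ((Real.exp (a₃*T) - 1)/a₃)) := hmul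
    _ = g₁*g₂/(a₂*a₃) * (Real.exp (-a₃*T) * (Real.exp (a₃*T) - 1)) := by ring
    _ = g₁*g₂/(a₂*a₃) * (1 - Real.exp (-a₃*T)) := by rw [exp_flip]

lemma comb_ge {a₁ a₂ a₃ g₁ g₂ T : ℝ} (ha₁ : 0 < a₁) (ha₂ : 0 < a₂) (ha₃ : 0 < a₃)
    (hg₁ : 0 < g₁) (hg₂ : 0 < g₂) (hT : 0 < T) :
    g₁*g₂/(a₂*a₃) * Real.exp (-a₁*T) * (1 - Real.exp (-a₃*T))
      ≤ g₁/a₂ * Real.exp (-a₁*T) * kF a₂ a₃ g₂ T + hF a₁ a₂ a₃ g₁ g₂ T := by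
  have hint1 : IntervalIntegrable (fun s => g₁/a₂ * Real.exp (-a₁*T) * Real.exp ((a₃-a₂)*s)) MeasureTheory.volume 0 T :=
    (continuous_const.mul (cont_exp_mul _)).intervalIntegrable _ _
  have hint2 : IntervalIntegrable (fun s => Real.exp (a₃*s) * fF a₁ a₂ g₁ s) MeasureTheory.volume 0 T :=
    ((cont_exp_mul _).mul (continuous_fF a₁ a₂ g₁)).intervalIntegrable _ _
  have hmono : (∫ s in (0:ℝ)..T, g₁/a₂ * Real.exp (-a₁*T) * Real.exp (a₃*s))
      ≤ ∫ s in (0:ℝ)..T, (g₁/a₂ * Real.exp (-a₁*T) * Real.exp ((a₃-a₂)*s) + Real.exp (a₃*s) * fF a₁ a₂ g₁ s) := by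
    apply intervalIntegral.integral_mono_on hT.le
      ((continuous_const.mul (cont_exp_mul _)).intervalIntegrable _ _) (hint1.add hint2)
    intro s hs
    have hf := fF_ge (T := T) ha₁.le ha₂ hg₁.le hs.1 hs.2
    have hp : Real.exp (a₃*s) * Real.exp (-a₂*s) = Real.exp ((a₃-a₂)*s) := by
      rw [exp_mul_exp]; ring_nf
    have h2 := mul_le_mul_of_nonneg_left hf (Real.exp_nonneg (a₃*s))
    have h3 : Real.exp (a₃*s) * (g₁/a₂ * Real.exp (-a₁*T) * (1 - Real.exp (-a₂*s)))
        = g₁/a₂ * Real.exp (-a₁*T) * Real.exp (a₃*s)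
          - g₁/a₂ * Real.exp (-a₁*T) * Real.exp ((a₃-a₂)*s) := by
      linear_combination (-(g₁/a₂ * Real.exp (-a₁*T))) * hp
    show g₁/a₂ * Real.exp (-a₁*T) * Real.exp (a₃*s) ≤ _
    linarith
  have hsplit : (∫ s in (0:ℝ)..T, (g₁/a₂ * Real.exp (-a₁*T) * Real.exp ((a₃-a₂)*s) + Real.exp (a₃*s) * fF a₁ a₂ g₁ s))
      = g₁/a₂ * Real.exp (-a₁*T) * (∫ s in (0:ℝ)..T, Real.exp ((a₃-a₂)*s))
        + ∫ s in (0:ℝ)..T, Real.exp (a₃*s) * fF a₁ a₂ g₁ s := by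
    rw [intervalIntegral.integral_add hint1 hint2, intervalIntegral.integral_const_mul]
  have hval : (∫ s in (0:ℝ)..T, g₁/a₂ * Real.exp (-a₁*T) * Real.exp (a₃*s))
      = g₁/a₂ * Real.exp (-a₁*T) * ((Real.exp (a₃*T) - 1)/a₃) := by
    rw [intervalIntegral.integral_const_mul, integral_exp_mul ha₃.ne', mul_zero, Real.exp_zero]
  have key : g₁/a₂ * Real.exp (-a₁*T) * ((Real.exp (a₃*T) - 1)/a₃)
      ≤ g₁/a₂ * Real.exp (-a₁*T) * (∫ s in (0:ℝ)..T, Real.exp ((a₃-a₂)*s))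
        + ∫ s in (0:ℝ)..T, Real.exp (a₃*s) * fF a₁ a₂ g₁ s := by
    rw [← hval, ← hsplit]; exact hmono
  have hmul := mul_le_mul_of_nonneg_left key (by positivity : (0:ℝ) ≤ g₂ * Real.exp (-a₃*T))
  calc g₁*g₂/(a₂*a₃) * Real.exp (-a₁*T) * (1 - Real.exp (-a₃*T))
      = g₁*g₂/(a₂*a₃) * Real.exp (-a₁*T) * (Real.exp (-a₃*T) * (Real.exp (a₃*T) - 1)) := by
        rw [exp_flip]
    _ = g₂ * Real.exp (-a₃*T) * (g₁/a₂ * Real.exp (-a₁*T) * ((Real.exp (a₃*T) - 1)/a₃)) := by ring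
    _ ≤ g₂ * Real.exp (-a₃*T) * (g₁/a₂ * Real.exp (-a₁*T) * (∫ s in (0:ℝ)..T, Real.exp ((a₃-a₂)*s))
          + ∫ s in (0:ℝ)..T, Real.exp (a₃*s) * fF a₁ a₂ g₁ s) := hmul
    _ = g₁/a₂ * Real.exp (-a₁*T) * kF a₂ a₃ g₂ T + hF a₁ a₂ a₃ g₁ g₂ T := by
        rw [kF, hF]; ring

set_option maxHeartbeats 1000000 in
/-- Corollary 1, first statement: if the 1-cycle with parameters `(λ, T)` keeps the
output in the corridor `[ȳ_min, ȳ_max]`, then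
`(a₂a₃/(g₁g₂)) ȳ_min (1 − e^{−a₁T}) ≤ λ ≤ (a₂a₃/(g₁g₂)) ȳ_max (e^{a₁T} − 1)`. -/
theorem necessary_dose_bounds
    (a₁ a₂ a₃ g₁ g₂ : ℝ)
    (ha₁ : 0 < a₁) (ha₂ : 0 < a₂) (ha₃ : 0 < a₃) (hg₁ : 0 < g₁) (hg₂ : 0 < g₂)
    (ymin ymax lam T : ℝ)
    (hymin : 0 < ymin) (hminmax : ymin < ymax) (hlam : 0 ≤ lam) (hT : 0 < T)
    (hcorridor : ∀ τ ∈ Set.Icc (0 : ℝ) T,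
      ymin ≤ lam * xi a₁ a₂ a₃ g₁ g₂ T τ ∧ lam * xi a₁ a₂ a₃ g₁ g₂ T τ ≤ ymax) :
    a₂ * a₃ / (g₁ * g₂) * ymin * (1 - Real.exp (-a₁ * T)) ≤ lam ∧
      lam ≤ a₂ * a₃ / (g₁ * g₂) * ymax * (Real.exp (a₁ * T) - 1) := by
  have hd : ∀ a : ℝ, 0 < a → (0:ℝ) < 1 - Real.exp (-a*T) := by
    intro a ha
    have : Real.exp (-a*T) < 1 := by
      rw [Real.exp_lt_one_iff]; nlinarith
    linarith
  have hd₁ := hd a₁ ha₁; have hd₂ := hd a₂ ha₂; have hd₃ := hd a₃ ha₃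
  have hξ := xi_zero_eq a₁ a₂ a₃ g₁ g₂ T ha₁ ha₂ ha₃ hT
  have hk := kF_nonneg (a₂ := a₂) (a₃ := a₃) hg₂.le hT.le
  have hfle := fF_le (a₁ := a₁) (a₂ := a₂) (g₁ := g₁) ha₁.le ha₂ hg₁.le hT.le
  have hfge := fF_ge (a₁ := a₁) (a₂ := a₂) (g₁ := g₁) (T := T) ha₁.le ha₂ hg₁.le hT.le le_rfl
  have hcle := comb_le ha₁ ha₂ ha₃ hg₁ hg₂ hT
  have hcge := comb_ge ha₁ ha₂ ha₃ hg₁ hg₂ hT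
  have hNub : fF a₁ a₂ g₁ T * kF a₂ a₃ g₂ T
        + (1 - Real.exp (-a₂*T)) * hF a₁ a₂ a₃ g₁ g₂ T
      ≤ g₁*g₂/(a₂*a₃) * ((1 - Real.exp (-a₂*T)) * (1 - Real.exp (-a₃*T))) := by
    nlinarith [mul_le_mul_of_nonneg_right hfle hk,
      mul_le_mul_of_nonneg_left hcle hd₂.le]
  have hNlb : g₁*g₂/(a₂*a₃) * Real.exp (-a₁*T) * ((1 - Real.exp (-a₂*T)) * (1 - Real.exp (-a₃*T)))
      ≤ fF a₁ a₂ g₁ T * kF a₂ a₃ g₂ T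
        + (1 - Real.exp (-a₂*T)) * hF a₁ a₂ a₃ g₁ g₂ T := by
    nlinarith [mul_le_mul_of_nonneg_right hfge hk,
      mul_le_mul_of_nonneg_left hcge hd₂.le]
  have hξub : xi a₁ a₂ a₃ g₁ g₂ T 0 ≤ g₁*g₂/(a₂*a₃) / (1 - Real.exp (-a₁*T)) := by
    rw [hξ, div_le_div_iff₀ (by positivity) hd₁]
    nlinarith [mul_le_mul_of_nonneg_right hNub hd₁.le]
  have hξlb : g₁*g₂/(a₂*a₃) * Real.exp (-a₁*T) / (1 - Real.exp (-a₁*T)) ≤ xi a₁ a₂ a₃ g₁ g₂ T 0 := by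
    rw [hξ, div_le_div_iff₀ hd₁ (by positivity)]
    nlinarith [mul_le_mul_of_nonneg_right hNlb hd₁.le]
  obtain ⟨h1, h2⟩ := hcorridor 0 ⟨le_refl 0, hT.le⟩
  constructor
  · have hA : ymin ≤ lam * (g₁*g₂/(a₂*a₃) / (1 - Real.exp (-a₁*T))) :=
      le_trans h1 (mul_le_mul_of_nonneg_left hξub hlam)
    have hB : ymin * (1 - Real.exp (-a₁*T)) ≤ lam * (g₁*g₂/(a₂*a₃)) := by
      rw [mul_div_assoc'] at hA
      exact (le_div_iff₀ hd₁).1 hA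
    have e3 : a₂*a₃/(g₁*g₂)*(lam*(g₁*g₂/(a₂*a₃))) = lam := by
      field_simp
    calc a₂ * a₃ / (g₁ * g₂) * ymin * (1 - Real.exp (-a₁ * T))
        = a₂*a₃/(g₁*g₂) * (ymin * (1 - Real.exp (-a₁*T))) := by ring
      _ ≤ a₂*a₃/(g₁*g₂) * (lam * (g₁*g₂/(a₂*a₃))) := by
          apply mul_le_mul_of_nonneg_left hB (by positivity)
      _ = lam := e3
  · have hA : lam * (g₁*g₂/(a₂*a₃) * Real.exp (-a₁*T) / (1 - Real.exp (-a₁*T))) ≤ ymax :=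
      le_trans (mul_le_mul_of_nonneg_left hξlb hlam) h2
    have hB : lam * (g₁*g₂/(a₂*a₃) * Real.exp (-a₁*T)) ≤ ymax * (1 - Real.exp (-a₁*T)) := by
      rw [mul_div_assoc'] at hA
      exact (div_le_iff₀ hd₁).1 hA
    have hee : Real.exp (-a₁*T) * Real.exp (a₁*T) = 1 := by
      rw [exp_mul_exp]; norm_num
    have hee' : Real.exp (-(a₁*T)) * Real.exp (a₁*T) = 1 := by
      rw [exp_mul_exp]; norm_num
    have e1 : a₂*a₃*Real.exp (a₁*T)/(g₁*g₂) * (lam * (g₁*g₂/(a₂*a₃) * Real.exp (-a₁*T))) = lam := by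
      field_simp
      linear_combination lam * hee'
    have e2 : a₂*a₃*Real.exp (a₁*T)/(g₁*g₂) * (ymax * (1 - Real.exp (-a₁*T)))
        = a₂ * a₃ / (g₁ * g₂) * ymax * (Real.exp (a₁ * T) - 1) := by
      field_simp
      linear_combination (-ymax) * hee'
    calc lam = a₂*a₃*Real.exp (a₁*T)/(g₁*g₂) * (lam * (g₁*g₂/(a₂*a₃) * Real.exp (-a₁*T))) := e1.symm
      _ ≤ a₂*a₃*Real.exp (a₁*T)/(g₁*g₂) * (ymax * (1 - Real.exp (-a₁*T))) := by
          apply mul_le_mul_of_nonneg_left hB (by positivity)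
      _ = a₂ * a₃ / (g₁ * g₂) * ymax * (Real.exp (a₁ * T) - 1) := e2
end

section
/- Let 0 < ȳ_min < ȳ_max, λ ≥ 0, T > 0, and suppose that ȳ_min ≤ λ ξ_T(τ) ≤ ȳ_max for all τ ∈ [0, T]. If moreover λ ≤ λ_max and T ≥ T_min for some constants λ_max and T_min > 0, then λ_max ≥ (a₂a₃/(g₁g₂)) · ȳ_min · (1 − e^{−a₁T_min}). -/
open Matrix

section Aux

attribute [local instance] Matrix.linftyOpNormedAddCommGroup Matrix.linftyOpNormedRing
  Matrix.linftyOpNormedAlgebra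

lemma key_deriv (A M : Matrix (Fin 3) (Fin 3) ℝ) (c B : Fin 3 → ℝ) (t : ℝ) :
    HasDerivAt (fun τ : ℝ => c ⬝ᵥ (NormedSpace.exp (τ • A) * M).mulVec B)
      ((c ᵥ* A) ⬝ᵥ (NormedSpace.exp (t • A) * M).mulVec B) t := by
  have h := hasDerivAt_exp_smul_const' (𝕂 := ℝ) A t
  let lmap : Matrix (Fin 3) (Fin 3) ℝ →ₗ[ℝ] ℝ :=
    { toFun := fun N => c ⬝ᵥ (N * M).mulVec B
      map_add' := by intro N N'; simp [Matrix.add_mul, Matrix.add_mulVec, dotProduct_add]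
      map_smul' := by intro r N; simp [Matrix.smul_mul, Matrix.smul_mulVec] }
  let L := LinearMap.toContinuousLinearMap lmap
  have h2 := (L.hasFDerivAt.comp_hasDerivAt t h)
  have e1 : (fun τ : ℝ => c ⬝ᵥ (NormedSpace.exp (τ • A) * M).mulVec B)
      = fun τ : ℝ => L (NormedSpace.exp (τ • A)) := rfl
  have e2 : L (A * NormedSpace.exp (t • A))
      = (c ᵥ* A) ⬝ᵥ (NormedSpace.exp (t • A) * M).mulVec B := by
    show c ⬝ᵥ ((A * NormedSpace.exp (t • A)) * M).mulVec B = _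
    rw [Matrix.dotProduct_mulVec, Matrix.dotProduct_mulVec, mul_assoc,
      ← Matrix.vecMul_vecMul]
  rw [e1, ← e2]
  exact h2

end Aux

/-- Corollary 1, second statement: if in addition `λ ≤ λ_max` and `T ≥ T_min > 0`,
then `λ_max ≥ (a₂a₃/(g₁g₂)) ȳ_min (1 − e^{−a₁T_min})`. -/
theorem necessary_dose_bound_lamMax
    (a₁ a₂ a₃ g₁ g₂ : ℝ)
    (ha₁ : 0 < a₁) (ha₂ : 0 < a₂) (ha₃ : 0 < a₃) (hg₁ : 0 < g₁) (hg₂ : 0 < g₂)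
    (ymin ymax lam T lamMax Tmin : ℝ)
    (hymin : 0 < ymin) (hminmax : ymin < ymax) (hlam : 0 ≤ lam) (hT : 0 < T)
    (hcorridor : ∀ τ ∈ Set.Icc (0 : ℝ) T,
      ymin ≤ lam * xi a₁ a₂ a₃ g₁ g₂ T τ ∧ lam * xi a₁ a₂ a₃ g₁ g₂ T τ ≤ ymax)
    (hlamMax : lam ≤ lamMax) (hTmin : 0 < Tmin) (hTge : Tmin ≤ T) :
    a₂ * a₃ / (g₁ * g₂) * ymin * (1 - Real.exp (-a₁ * Tmin)) ≤ lamMax := by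
  set A := Amat a₁ a₂ a₃ g₁ g₂ with hA
  set E := NormedSpace.exp (T • A) with hE
  set M := (1 - E)⁻¹ with hM
  by_cases hunit : IsUnit (1 - E).det
  · -- main case
    set G := g₁ * g₂ / (a₁ * a₂ * a₃) with hG
    have hGpos : 0 < G := by positivity
    set c : Fin 3 → ℝ := ![-(g₁ * g₂) / (a₁ * a₂ * a₃), -(g₂ / (a₂ * a₃)), -(1 / a₃)] with hc
    have hcA : c ᵥ* A = ![0, 0, 1] := by
      funext j
      rw [hA, Amat]
      fin_cases j <;>
        simp [Matrix.vecMul, dotProduct, Fin.sum_univ_three, hc] <;>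
        field_simp <;> ring
    set φ : ℝ → ℝ := fun τ => c ⬝ᵥ (NormedSpace.exp (τ • A) * M).mulVec Bvec with hφ
    have hderiv : ∀ t : ℝ, HasDerivAt φ (xi a₁ a₂ a₃ g₁ g₂ T t) t := by
      intro t
      have h := key_deriv A M c Bvec t
      rw [hcA] at h
      have : (![0, 0, 1] : Fin 3 → ℝ) ⬝ᵥ (NormedSpace.exp (t • A) * M).mulVec Bvec
          = xi a₁ a₂ a₃ g₁ g₂ T t := by
        simp [xi, Cout, dotProduct, Fin.sum_univ_three, hM, hE, hA]
      rwa [this] at h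
    have hslope : φ T - φ 0 = G := by
      have hEM : E * M - 1 * M = -(1 : Matrix (Fin 3) (Fin 3) ℝ) := by
        have := Matrix.mul_nonsing_inv (1 - E) hunit
        rw [Matrix.sub_mul] at this
        rw [hM]
        linear_combination (norm := noncomm_ring) -this
      have h0 : (0 : ℝ) • A = 0 := zero_smul _ _
      have : φ T - φ 0 = c ⬝ᵥ ((E * M - 1 * M).mulVec Bvec) := by
        simp only [hφ, h0, NormedSpace.exp_zero, hE]
        rw [Matrix.sub_mulVec, dotProduct_sub]
      rw [this, hEM]
      simp [Bvec, dotProduct, Fin.sum_univ_three, hc, hG, Matrix.neg_mulVec]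
      field_simp
    obtain ⟨τ, hτ, hξ⟩ := exists_hasDerivAt_eq_slope φ (fun t => xi a₁ a₂ a₃ g₁ g₂ T t) hT
      (fun t _ => (hderiv t).continuousAt.continuousWithinAt)
      (fun t _ => hderiv t)
    rw [hslope] at hξ
    have hmem : τ ∈ Set.Icc (0 : ℝ) T := ⟨le_of_lt hτ.1, le_of_lt hτ.2⟩
    have hy := (hcorridor τ hmem).1
    rw [hξ] at hy
    -- ymin ≤ lam * ((G - 0)/(T - 0))  hence lam ≥ ymin * T / G
    have hlamge : ymin * T / G ≤ lam := by
      rw [div_le_iff₀ hGpos]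
      rw [sub_zero, ← mul_div_assoc] at hy
      exact (le_div_iff₀ hT).mp hy
    have hexp : 1 - Real.exp (-a₁ * Tmin) ≤ a₁ * Tmin := by
      nlinarith [Real.add_one_le_exp (-a₁ * Tmin)]
    have h1 : a₂ * a₃ / (g₁ * g₂) * ymin * (1 - Real.exp (-a₁ * Tmin))
        ≤ a₂ * a₃ / (g₁ * g₂) * ymin * (a₁ * Tmin) := by
      have : 0 < a₂ * a₃ / (g₁ * g₂) * ymin := by positivity
      nlinarith
    have h2 : a₂ * a₃ / (g₁ * g₂) * ymin * (a₁ * Tmin) ≤ ymin * T / G := by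
      rw [hG, div_div_eq_mul_div, div_mul_eq_mul_div, div_mul_eq_mul_div,
        div_le_div_iff₀ (by positivity) (by positivity)]
      nlinarith [mul_le_mul_of_nonneg_left hTge
        (le_of_lt (show (0:ℝ) < a₁ * a₂ * a₃ * ymin * (g₁ * g₂) by positivity))]
    linarith
  · -- degenerate case: inverse is zero, contradiction with corridor
    exfalso
    have hM0 : M = 0 := Matrix.nonsing_inv_apply_not_isUnit _ hunit
    have h0 := (hcorridor 0 ⟨le_refl 0, le_of_lt hT⟩).1
    have : xi a₁ a₂ a₃ g₁ g₂ T 0 = 0 := by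
      simp [xi, Cout, ← hE, ← hM, hM0, ← hA]
    rw [this, mul_zero] at h0
    linarith
end

section
/- Let 0 < ȳ_min < ȳ_max, T > 0 and λ_max > 0 satisfy e^{a₁T} ȳ_min < ȳ_max and λ_max ≥ (a₂a₃/(g₁g₂)) · ȳ_min · (e^{a₁T} − 1). Then there exists λ ∈ [0, λ_max] such that ȳ_min ≤ λ ξ_T(τ) ≤ ȳ_max for all τ ∈ [0, T] (i.e., the 1-cycle with dose λ and period T keeps the output in the prescribed corridor). -/
open Matrix


/-- Solution of `f' = -b f` is exponential. -/
lemma ode_solution {f : ℝ → ℝ} {b : ℝ} (hf : ∀ t, HasDerivAt f (-b * f t) t) (t : ℝ) :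
    f t = f 0 * Real.exp (-b * t) := by
  have key : ∀ s : ℝ, Real.exp (b * s) * f s = f 0 := by
    have h1 : ∀ u : ℝ, HasDerivAt (fun s => Real.exp (b * s) * f s) 0 u := by
      intro u
      have he : HasDerivAt (fun s : ℝ => Real.exp (b * s)) (b * Real.exp (b * u)) u := by
        simpa [mul_comm, Function.comp_def] using
          (Real.hasDerivAt_exp (b * u)).comp u ((hasDerivAt_id u).const_mul b)
      have := he.mul (hf u)
      refine this.congr_deriv ?_
      ring
    intro s
    have := is_const_of_deriv_eq_zero (fun u => (h1 u).differentiableAt)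
      (fun u => (h1 u).deriv) s 0
    simpa using this
  have h0 := key t
  have hne : Real.exp (b * t) ≠ 0 := (Real.exp_pos _).ne'
  rw [← h0, neg_mul, Real.exp_neg, mul_comm (Real.exp (b*t)) (f t), mul_assoc,
    mul_inv_cancel₀ hne, mul_one]

/-- Periodic comparison: if `f' = h - b f`, `f T = f 0`, and `c ≤ h` on `[0,T]`,
then `c / b ≤ f` on `[0,T]`. -/
lemma periodic_lower {f h : ℝ → ℝ} {b c T : ℝ} (hb : 0 < b) (hT : 0 < T)
    (hf : ∀ t, HasDerivAt f (h t - b * f t) t)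
    (hper : f T = f 0)
    (hc : ∀ t ∈ Set.Icc (0:ℝ) T, c ≤ h t) :
    ∀ t ∈ Set.Icc (0:ℝ) T, c / b ≤ f t := by
  set g : ℝ → ℝ := fun s => Real.exp (b * s) * (f s - c / b) with hg
  have hg' : ∀ u : ℝ, HasDerivAt g (Real.exp (b * u) * (h u - c)) u := by
    intro u
    have he : HasDerivAt (fun s : ℝ => Real.exp (b * s)) (b * Real.exp (b * u)) u := by
      simpa [mul_comm, Function.comp_def] using
        (Real.hasDerivAt_exp (b * u)).comp u ((hasDerivAt_id u).const_mul b)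
    have := he.mul ((hf u).sub_const (c / b))
    refine this.congr_deriv ?_
    field_simp
    ring
  have hmono : MonotoneOn g (Set.Icc 0 T) := by
    apply monotoneOn_of_deriv_nonneg (convex_Icc 0 T)
      (fun u _ => (hg' u).differentiableAt.continuousAt.continuousWithinAt)
      (fun u _ => ((hg' u).differentiableAt).differentiableWithinAt)
    intro u hu
    rw [interior_Icc] at hu
    rw [(hg' u).deriv]
    have h1 : c ≤ h u := hc u ⟨le_of_lt hu.1, le_of_lt hu.2⟩
    have h2 : (0:ℝ) ≤ h u - c := by linarith
    positivity
  have h0T : g 0 ≤ g T :=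
    hmono ⟨le_refl 0, hT.le⟩ ⟨hT.le, le_refl T⟩ hT.le
  have hexp : 1 < Real.exp (b * T) := by
    calc (1:ℝ) = Real.exp 0 := Real.exp_zero.symm
    _ < Real.exp (b * T) := Real.exp_lt_exp.mpr (by positivity)
  have h0T' : f T - c / b ≤ Real.exp (b * T) * (f T - c / b) := by
    simpa [hg, hper] using h0T
  have hgT : (0:ℝ) ≤ f T - c / b := by
    by_contra hw
    push_neg at hw
    have := mul_lt_mul_of_neg_right hexp hw
    simp only [one_mul] at this
    linarith
  intro t ht
  have hmt : g 0 ≤ g t := hmono ⟨le_refl 0, hT.le⟩ ht ht.1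
  have hg0 : (0:ℝ) ≤ g 0 := by
    simp only [hg, mul_zero, Real.exp_zero, one_mul, ← hper]
    exact hgT
  have hgt : (0:ℝ) ≤ Real.exp (b * t) * (f t - c / b) := le_trans hg0 hmt
  by_contra hw
  push_neg at hw
  have := mul_neg_of_pos_of_neg (Real.exp_pos (b * t)) (by linarith : f t - c / b < 0)
  linarith

lemma periodic_upper {f h : ℝ → ℝ} {b c T : ℝ} (hb : 0 < b) (hT : 0 < T)
    (hf : ∀ t, HasDerivAt f (h t - b * f t) t)
    (hper : f T = f 0)
    (hc : ∀ t ∈ Set.Icc (0:ℝ) T, h t ≤ c) :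
    ∀ t ∈ Set.Icc (0:ℝ) T, f t ≤ c / b := by
  have key := periodic_lower (f := fun t => -f t) (h := fun t => -h t) (c := -c) hb hT
    (fun t => by
      have := (hf t).neg
      refine this.congr_deriv ?_
      ring)
    (by simpa using hper)
    (fun t ht => neg_le_neg (hc t ht))
  intro t ht
  have h2 := key t ht
  rw [neg_div] at h2
  simp only [neg_le_neg_iff] at h2
  linarith

/-- The linear map `X ↦ ((X * M) *ᵥ v) i`. -/
noncomputable def entryL (M : Matrix (Fin 3) (Fin 3) ℝ) (v : Fin 3 → ℝ) (i : Fin 3) :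
    Matrix (Fin 3) (Fin 3) ℝ →ₗ[ℝ] ℝ where
  toFun X := ((X * M).mulVec v) i
  map_add' X Y := by simp [Matrix.add_mul, Matrix.add_mulVec]
  map_smul' r X := by simp [Matrix.smul_mul, Matrix.smul_mulVec]

lemma hasDerivAt_entry (A M : Matrix (Fin 3) (Fin 3) ℝ) (v : Fin 3 → ℝ) (i : Fin 3) (τ : ℝ) :
    HasDerivAt (fun t : ℝ => ((NormedSpace.exp (t • A) * M).mulVec v) i)
      ((A.mulVec ((NormedSpace.exp (τ • A) * M).mulVec v)) i) τ := by
  letI : SeminormedRing (Matrix (Fin 3) (Fin 3) ℝ) := Matrix.linftyOpSemiNormedRing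
  letI : NormedRing (Matrix (Fin 3) (Fin 3) ℝ) := Matrix.linftyOpNormedRing
  letI : NormedAlgebra ℝ (Matrix (Fin 3) (Fin 3) ℝ) := Matrix.linftyOpNormedAlgebra
  have hexp : HasDerivAt (fun u : ℝ => NormedSpace.exp (u • A))
      (A * NormedSpace.exp (τ • A)) τ := hasDerivAt_exp_smul_const' A τ
  have hL := ((entryL M v i).toContinuousLinearMap.hasFDerivAt).comp_hasDerivAt τ hexp
  refine hL.congr_deriv (Eq.symm ?_)
  show (A.mulVec ((NormedSpace.exp (τ • A) * M).mulVec v)) i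
      = ((A * NormedSpace.exp (τ • A) * M).mulVec v) i
  rw [Matrix.mulVec_mulVec, ← Matrix.mul_assoc]

lemma arith_eq1 {a₂ a₃ g₁ g₂ X E F y : ℝ} (ha₂ : a₂ ≠ 0) (ha₃ : a₃ ≠ 0) (hg₁ : g₁ ≠ 0)
    (hg₂ : g₂ ≠ 0) (hXE : X * E ≠ 0) (hXEF : X * E * (F - 1) = 1) :
    a₂ * a₃ / (g₁ * g₂) * y * (F - 1) = y / (g₂ * (g₁ * (X * E) / a₂) / a₃) := by
  have hLo : g₂ * (g₁ * (X * E) / a₂) / a₃ ≠ 0 := by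
    exact div_ne_zero (mul_ne_zero hg₂ (div_ne_zero (mul_ne_zero hg₁ hXE) ha₂)) ha₃
  rw [eq_div_iff hLo]
  field_simp
  linear_combination y * hXEF

lemma arith_eq2 {a₂ a₃ g₁ g₂ X E F : ℝ} (ha₂ : a₂ ≠ 0) (ha₃ : a₃ ≠ 0) (hFE : F * E = 1) :
    g₂ * (g₁ * X / a₂) / a₃ = F * (g₂ * (g₁ * (X * E) / a₂) / a₃) := by
  field_simp
  linear_combination (-(g₁ * g₂ * X)) * hFE

lemma arith_eq3 {Lo F y : ℝ} (hLo : Lo ≠ 0) :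
    y / Lo * (F * Lo) = F * y := by
  field_simp


/-- Corollary 2: if `e^{a₁T} ȳ_min < ȳ_max` and
`λ_max ≥ (a₂a₃/(g₁g₂)) ȳ_min (e^{a₁T} − 1)`, then some dose `λ ∈ [0, λ_max]` yields a
1-cycle of period `T` whose output stays in the corridor `[ȳ_min, ȳ_max]`. -/
theorem sufficient_condition_exists_dose
    (a₁ a₂ a₃ g₁ g₂ : ℝ)
    (ha₁ : 0 < a₁) (ha₂ : 0 < a₂) (ha₃ : 0 < a₃) (hg₁ : 0 < g₁) (hg₂ : 0 < g₂)
    (ymin ymax T lamMax : ℝ)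
    (hymin : 0 < ymin) (hminmax : ymin < ymax) (hT : 0 < T) (hlamMax : 0 < lamMax)
    (hcond1 : Real.exp (a₁ * T) * ymin < ymax)
    (hcond2 : a₂ * a₃ / (g₁ * g₂) * ymin * (Real.exp (a₁ * T) - 1) ≤ lamMax) :
    ∃ lam ∈ Set.Icc (0 : ℝ) lamMax, ∀ τ ∈ Set.Icc (0 : ℝ) T,
      ymin ≤ lam * xi a₁ a₂ a₃ g₁ g₂ T τ ∧ lam * xi a₁ a₂ a₃ g₁ g₂ T τ ≤ ymax := by
  set A : Matrix (Fin 3) (Fin 3) ℝ := Amat a₁ a₂ a₃ g₁ g₂ with hAdef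
  -- components of `A.mulVec`
  have hmv : ∀ w : Fin 3 → ℝ, (A.mulVec w) 0 = -a₁ * w 0 ∧
      (A.mulVec w) 1 = g₁ * w 0 - a₂ * w 1 ∧ (A.mulVec w) 2 = g₂ * w 1 - a₃ * w 2 := by
    intro w
    refine ⟨?_, ?_, ?_⟩ <;>
      simp [hAdef, Amat, Matrix.mulVec, dotProduct, Fin.sum_univ_three] <;> ring
  -- entrywise derivative of the exponential
  have hFderiv : ∀ (i j : Fin 3) (τ : ℝ), HasDerivAt (fun t => NormedSpace.exp (t • A) i j)
      ((A.mulVec (fun k => NormedSpace.exp (τ • A) k j)) i) τ := by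
    intro i j τ
    have h := hasDerivAt_entry A 1 (Pi.single j 1) i τ
    have hs : ∀ (X : Matrix (Fin 3) (Fin 3) ℝ), (X * 1).mulVec (Pi.single j 1) = fun i => X i j := by
      intro X
      funext k
      simp [Matrix.mulVec, dotProduct, Pi.single_apply, Fin.sum_univ_three]
    simp only [hs] at h
    exact h
  have hP0 : NormedSpace.exp ((0:ℝ) • A) = 1 := by
    rw [zero_smul, NormedSpace.exp_zero]
  -- row 0 of the exponential
  have hrow0 : ∀ (j : Fin 3) (t : ℝ),
      NormedSpace.exp (t • A) 0 j = (1 : Matrix (Fin 3) (Fin 3) ℝ) 0 j * Real.exp (-a₁ * t) := by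
    intro j t
    have := ode_solution (f := fun t => NormedSpace.exp (t • A) 0 j) (b := a₁)
      (fun τ => by
        have h := hFderiv 0 j τ
        rwa [(hmv _).1] at h) t
    simpa [hP0] using this
  -- entry (1,2)
  have h12 : ∀ t : ℝ, NormedSpace.exp (t • A) 1 2 = 0 := by
    intro t
    have := ode_solution (f := fun t => NormedSpace.exp (t • A) 1 2) (b := a₂)
      (fun τ => by
        have h := hFderiv 1 2 τ
        rw [(hmv _).2.1, hrow0 2 τ] at h
        simp only [Matrix.one_apply] at h
        convert h using 1
        simp) t
    rw [this, hP0]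
    simp [Matrix.one_apply]
  -- entry (1,1) at T
  have h11 : NormedSpace.exp (T • A) 1 1 = Real.exp (-a₂ * T) := by
    have := ode_solution (f := fun t => NormedSpace.exp (t • A) 1 1) (b := a₂)
      (fun τ => by
        have h := hFderiv 1 1 τ
        rw [(hmv _).2.1, hrow0 1 τ] at h
        simp only [Matrix.one_apply] at h
        convert h using 1
        simp) T
    rw [this, hP0]
    simp [Matrix.one_apply]
  -- entry (2,2) at T
  have h22 : NormedSpace.exp (T • A) 2 2 = Real.exp (-a₃ * T) := by
    have := ode_solution (f := fun t => NormedSpace.exp (t • A) 2 2) (b := a₃)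
      (fun τ => by
        have h := hFderiv 2 2 τ
        rw [(hmv _).2.2, h12 τ] at h
        convert h using 1
        ring) T
    rw [this, hP0]
    simp [Matrix.one_apply]
  have hE1 : ∀ a : ℝ, 0 < a → Real.exp (-a * T) < 1 := by
    intro a ha
    rw [show (1:ℝ) = Real.exp 0 from Real.exp_zero.symm]
    apply Real.exp_lt_exp.mpr
    nlinarith
  -- determinant of 1 - exp(T • A)
  set D : Matrix (Fin 3) (Fin 3) ℝ := 1 - NormedSpace.exp (T • A) with hDdef
  have hdet : D.det = (1 - Real.exp (-a₁ * T)) * ((1 - Real.exp (-a₂ * T)) *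
      (1 - Real.exp (-a₃ * T))) := by
    rw [Matrix.det_fin_three]
    have e01 : NormedSpace.exp (T • A) 0 1 = 0 := by
      rw [hrow0 1 T]; simp [Matrix.one_apply]
    have e02 : NormedSpace.exp (T • A) 0 2 = 0 := by
      rw [hrow0 2 T]; simp [Matrix.one_apply]
    have e00 : NormedSpace.exp (T • A) 0 0 = Real.exp (-a₁ * T) := by
      rw [hrow0 0 T]; simp [Matrix.one_apply]
    simp only [hDdef, Matrix.sub_apply, Matrix.one_apply, e01, e02, e00, h11, h22, h12 T]
    simp
    ring
  have hdetunit : IsUnit D.det := by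
    rw [hdet]
    apply IsUnit.mul <;> [skip; apply IsUnit.mul] <;>
      exact isUnit_iff_ne_zero.mpr (by nlinarith [hE1 a₁ ha₁, hE1 a₂ ha₂, hE1 a₃ ha₃])
  set M : Matrix (Fin 3) (Fin 3) ℝ := D⁻¹ with hMdef
  have hDM : D * M = 1 := Matrix.mul_nonsing_inv D hdetunit
  have hPTM : NormedSpace.exp (T • A) * M = M - 1 := by
    have h1 : M - NormedSpace.exp (T • A) * M = 1 := by
      have := hDM
      rw [hDdef, Matrix.sub_mul, Matrix.one_mul] at this
      exact this
    calc NormedSpace.exp (T • A) * M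
        = M - (M - NormedSpace.exp (T • A) * M) := by abel
      _ = M - 1 := by rw [h1]
  -- the periodic trajectory
  set x : ℝ → Fin 3 → ℝ := fun t => (NormedSpace.exp (t • A) * M).mulVec Bvec with hxdef
  have hxi : ∀ τ : ℝ, xi a₁ a₂ a₃ g₁ g₂ T τ = x τ 2 := fun τ => rfl
  have hxd : ∀ (τ : ℝ) (i : Fin 3), HasDerivAt (fun t => x t i) ((A.mulVec (x τ)) i) τ :=
    fun τ i => hasDerivAt_entry A M Bvec i τ
  have hB0 : Bvec 0 = 1 := rfl
  have hB1 : Bvec 1 = 0 := rfl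
  have hxT : ∀ i, x T i = x 0 i - Bvec i := by
    intro i
    have h0 : x 0 = M.mulVec Bvec := by
      rw [hxdef]
      show (NormedSpace.exp ((0:ℝ) • A) * M).mulVec Bvec = _
      rw [hP0, Matrix.one_mul]
    have hT' : x T = M.mulVec Bvec - Bvec := by
      rw [hxdef]
      show (NormedSpace.exp (T • A) * M).mulVec Bvec = _
      rw [hPTM, Matrix.sub_mulVec, Matrix.one_mulVec]
    rw [hT', h0]
    simp [Pi.sub_apply]
  set E := Real.exp (-a₁ * T) with hEdef
  have hE0 : 0 < E := Real.exp_pos _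
  have hE1' : E < 1 := hE1 a₁ ha₁
  have hexpE : Real.exp (a₁ * T) * E = 1 := by
    rw [hEdef, ← Real.exp_add, show a₁ * T + -a₁ * T = 0 by ring, Real.exp_zero]
  -- first component
  have hx1ode : ∀ τ : ℝ, HasDerivAt (fun t => x t 0) (-a₁ * x τ 0) τ := by
    intro τ
    have h := hxd τ 0
    rwa [(hmv _).1] at h
  have hx1 : ∀ t : ℝ, x t 0 = x 0 0 * Real.exp (-a₁ * t) := ode_solution hx1ode
  have hx00T : x 0 0 * E = x 0 0 - 1 := by
    have h := hxT 0
    rw [hx1 T, hB0] at h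
    rw [hEdef]
    linarith
  have hx00 : x 0 0 * (1 - E) = 1 := by linear_combination (-1 : ℝ) * hx00T
  have hx00pos : 0 < x 0 0 := by nlinarith [hx00, hE1', hE0]
  have hx1lb : ∀ t ∈ Set.Icc (0:ℝ) T, x 0 0 * E ≤ x t 0 := by
    intro t ht
    rw [hx1 t, hEdef]
    exact mul_le_mul_of_nonneg_left (Real.exp_le_exp.mpr (by nlinarith [ht.2])) hx00pos.le
  have hx1ub : ∀ t ∈ Set.Icc (0:ℝ) T, x t 0 ≤ x 0 0 := by
    intro t ht
    rw [hx1 t]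
    have h1 : Real.exp (-a₁ * t) ≤ 1 := Real.exp_le_one_iff.mpr (by nlinarith [ht.1])
    nlinarith [hx00pos]
  -- second component
  have hx2ode : ∀ τ : ℝ, HasDerivAt (fun t => x t 1) (g₁ * x τ 0 - a₂ * x τ 1) τ := by
    intro τ
    have h := hxd τ 1
    rwa [(hmv _).2.1] at h
  have hx2per : x T 1 = x 0 1 := by
    have h := hxT 1
    rw [hB1] at h
    linarith
  have hx2lb := periodic_lower (f := fun t => x t 1) (h := fun t => g₁ * x t 0)
    (c := g₁ * (x 0 0 * E)) ha₂ hT hx2ode hx2per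
    (fun t ht => mul_le_mul_of_nonneg_left (hx1lb t ht) hg₁.le)
  have hx2ub := periodic_upper (f := fun t => x t 1) (h := fun t => g₁ * x t 0)
    (c := g₁ * x 0 0) ha₂ hT hx2ode hx2per
    (fun t ht => mul_le_mul_of_nonneg_left (hx1ub t ht) hg₁.le)
  -- third component
  have hx3ode : ∀ τ : ℝ, HasDerivAt (fun t => x t 2) (g₂ * x τ 1 - a₃ * x τ 2) τ := by
    intro τ
    have h := hxd τ 2
    rwa [(hmv _).2.2] at h
  have hx3per : x T 2 = x 0 2 := by
    have h := hxT 2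
    rw [show Bvec 2 = 0 from rfl] at h
    linarith
  have hx3lb := periodic_lower (f := fun t => x t 2) (h := fun t => g₂ * x t 1)
    (c := g₂ * (g₁ * (x 0 0 * E) / a₂)) ha₃ hT hx3ode hx3per
    (fun t ht => mul_le_mul_of_nonneg_left (hx2lb t ht) hg₂.le)
  have hx3ub := periodic_upper (f := fun t => x t 2) (h := fun t => g₂ * x t 1)
    (c := g₂ * (g₁ * x 0 0 / a₂)) ha₃ hT hx3ode hx3per
    (fun t ht => mul_le_mul_of_nonneg_left (hx2ub t ht) hg₂.le)
  -- conclusion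
  set Lo : ℝ := g₂ * (g₁ * (x 0 0 * E) / a₂) / a₃ with hLodef
  set Hi : ℝ := g₂ * (g₁ * x 0 0 / a₂) / a₃ with hHidef
  have hLopos : 0 < Lo := by
    rw [hLodef]
    have := mul_pos hx00pos hE0
    positivity
  have hXEF : (x 0 0 * E) * (Real.exp (a₁ * T) - 1) = 1 := by
    linear_combination hx00 + x 0 0 * hexpE
  have hXE0 : x 0 0 * E ≠ 0 := (mul_pos hx00pos hE0).ne'
  have hlam_eq : a₂ * a₃ / (g₁ * g₂) * ymin * (Real.exp (a₁ * T) - 1) = ymin / Lo :=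
    arith_eq1 ha₂.ne' ha₃.ne' hg₁.ne' hg₂.ne' hXE0 hXEF
  have hHiF : Hi = Real.exp (a₁ * T) * Lo :=
    arith_eq2 ha₂.ne' ha₃.ne' hexpE
  set lam : ℝ := ymin / Lo with hlamdef
  have hlampos : 0 < lam := div_pos hymin hLopos
  have hlamLo : lam * Lo = ymin := div_mul_cancel₀ _ hLopos.ne'
  have hlamHi : lam * Hi = Real.exp (a₁ * T) * ymin := by
    rw [hHiF, hlamdef]
    exact arith_eq3 hLopos.ne'
  refine ⟨lam, ⟨hlampos.le, hlam_eq ▸ hcond2⟩, ?_⟩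
  intro τ hτ
  rw [hxi τ]
  constructor
  · calc ymin = lam * Lo := hlamLo.symm
      _ ≤ lam * x τ 2 := mul_le_mul_of_nonneg_left (hx3lb τ hτ) hlampos.le
  · calc lam * x τ 2 ≤ lam * Hi := mul_le_mul_of_nonneg_left (hx3ub τ hτ) hlampos.le
      _ = Real.exp (a₁ * T) * ymin := hlamHi
      _ ≤ ymax := hcond1.le
end

section
/- For every T > 0 and every τ ≥ 0, one has ξ_T(τ) > 0. (Positivity of the 1-cycle output: since A is Metzler, e^{sA} has nonnegative entries for s ≥ 0, (I − e^{TA})⁻¹ = Σ_{k≥0} e^{kTA} entrywise, and the (3,1)-entry of e^{sA} is strictly positive for s > 0.) -/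
open Matrix

section XiPosHelpers

noncomputable def Nmat (a₁ a₂ a₃ g₁ g₂ : ℝ) : Matrix (Fin 3) (Fin 3) ℝ :=
  !![a₂ + a₃, 0, 0; g₁, a₁ + a₃, 0; 0, g₂, a₁ + a₂]

attribute [local instance] Matrix.linftyOpNormedRing Matrix.linftyOpNormedAlgebra

noncomputable def entryCLM (i j : Fin 3) : Matrix (Fin 3) (Fin 3) ℝ →L[ℝ] ℝ :=
  LinearMap.toContinuousLinearMap
    { toFun := fun M => M i j
      map_add' := fun _ _ => rfl
      map_smul' := fun _ _ => rfl }

theorem exp_entry (M : Matrix (Fin 3) (Fin 3) ℝ) (i j : Fin 3) :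
    (NormedSpace.exp M) i j = ∑' k : ℕ, (((Nat.factorial k : ℝ))⁻¹ * (M ^ k) i j) := by
  rw [NormedSpace.exp_eq_tsum ℝ]
  have h : (tsum (fun n : ℕ => ((Nat.factorial n : ℝ))⁻¹ • M ^ n)) i j
      = ∑' k : ℕ, (((Nat.factorial k : ℝ))⁻¹ * (M ^ k) i j) := by
    have := (entryCLM i j).map_tsum (NormedSpace.expSeries_summable' (𝕂 := ℝ) M)
    exact this
  exact h

theorem entry_summable (M : Matrix (Fin 3) (Fin 3) ℝ) (i j : Fin 3) :
    Summable (fun k : ℕ => ((Nat.factorial k : ℝ))⁻¹ * (M ^ k) i j) := by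
  have := ((NormedSpace.expSeries_summable' (𝕂 := ℝ) M).map
    (entryCLM i j).toLinearMap.toAddMonoidHom (entryCLM i j).continuous)
  exact this

variable {a₁ a₂ a₃ g₁ g₂ : ℝ}

theorem smul_Amat_eq (s : ℝ) :
    s • Amat a₁ a₂ a₃ g₁ g₂ =
      s • Nmat a₁ a₂ a₃ g₁ g₂ + (-(s * (a₁ + a₂ + a₃))) • (1 : Matrix (Fin 3) (Fin 3) ℝ) := by
  ext i j
  fin_cases i <;> fin_cases j <;>
    simp [Amat, Nmat, Matrix.one_apply] <;> ring

theorem exp_smul_one (r : ℝ) :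
    NormedSpace.exp (r • (1 : Matrix (Fin 3) (Fin 3) ℝ)) = Real.exp r • 1 := by
  have h1 : r • (1 : Matrix (Fin 3) (Fin 3) ℝ) = Matrix.diagonal (fun _ => r) := by
    ext i j
    simp [Matrix.one_apply, Matrix.diagonal_apply, mul_ite]
  rw [h1, Matrix.exp_diagonal]
  ext i j
  simp [Matrix.diagonal_apply, Matrix.one_apply, Real.exp_eq_exp_ℝ, mul_ite]

theorem exp_smul_Amat_entry (s : ℝ) (i j : Fin 3) :
    (NormedSpace.exp (s • Amat a₁ a₂ a₃ g₁ g₂)) i j =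
      Real.exp (-(s * (a₁ + a₂ + a₃))) *
        ∑' k : ℕ, ((Nat.factorial k : ℝ))⁻¹ * (s ^ k * (Nmat a₁ a₂ a₃ g₁ g₂ ^ k) i j) := by
  have comm : Commute (s • Nmat a₁ a₂ a₃ g₁ g₂)
      ((-(s * (a₁ + a₂ + a₃))) • (1 : Matrix (Fin 3) (Fin 3) ℝ)) :=
    ((Commute.one_right (Nmat a₁ a₂ a₃ g₁ g₂)).smul_left s).smul_right _
  rw [smul_Amat_eq s, Matrix.exp_add_of_commute _ _ comm, exp_smul_one, mul_smul_comm,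
    mul_one, Matrix.smul_apply, exp_entry, smul_eq_mul]
  congr 1
  refine tsum_congr fun k => ?_
  rw [smul_pow, Matrix.smul_apply, smul_eq_mul]

theorem exp_entry_summable (s : ℝ) (i j : Fin 3) :
    Summable (fun k : ℕ => ((Nat.factorial k : ℝ))⁻¹ * (s ^ k * (Nmat a₁ a₂ a₃ g₁ g₂ ^ k) i j)) := by
  have := entry_summable (s • Nmat a₁ a₂ a₃ g₁ g₂) i j
  simpa [smul_pow, mul_assoc] using this


theorem Nmat_entry_nonneg (ha₁ : 0 ≤ a₁) (ha₂ : 0 ≤ a₂) (ha₃ : 0 ≤ a₃)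
    (hg₁ : 0 ≤ g₁) (hg₂ : 0 ≤ g₂) :
    ∀ i j, 0 ≤ Nmat a₁ a₂ a₃ g₁ g₂ i j := by
  intro i j
  fin_cases i <;> fin_cases j <;> simp [Nmat] <;> positivity

theorem Npow_props (ha₁ : 0 ≤ a₁) (ha₂ : 0 ≤ a₂) (ha₃ : 0 ≤ a₃)
    (hg₁ : 0 ≤ g₁) (hg₂ : 0 ≤ g₂) (k : ℕ) :
    (∀ i j, 0 ≤ (Nmat a₁ a₂ a₃ g₁ g₂ ^ k) i j) ∧
    (Nmat a₁ a₂ a₃ g₁ g₂ ^ k) 0 1 = 0 ∧ (Nmat a₁ a₂ a₃ g₁ g₂ ^ k) 0 2 = 0 ∧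
    (Nmat a₁ a₂ a₃ g₁ g₂ ^ k) 1 2 = 0 ∧
    (Nmat a₁ a₂ a₃ g₁ g₂ ^ k) 0 0 = (a₂ + a₃) ^ k ∧
    (Nmat a₁ a₂ a₃ g₁ g₂ ^ k) 1 1 = (a₁ + a₃) ^ k ∧
    (Nmat a₁ a₂ a₃ g₁ g₂ ^ k) 2 2 = (a₁ + a₂) ^ k := by
  have e00 : Nmat a₁ a₂ a₃ g₁ g₂ 0 0 = a₂ + a₃ := rfl
  have e01 : Nmat a₁ a₂ a₃ g₁ g₂ 0 1 = 0 := rfl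
  have e02 : Nmat a₁ a₂ a₃ g₁ g₂ 0 2 = 0 := rfl
  have e10 : Nmat a₁ a₂ a₃ g₁ g₂ 1 0 = g₁ := rfl
  have e11 : Nmat a₁ a₂ a₃ g₁ g₂ 1 1 = a₁ + a₃ := rfl
  have e12 : Nmat a₁ a₂ a₃ g₁ g₂ 1 2 = 0 := rfl
  have e20 : Nmat a₁ a₂ a₃ g₁ g₂ 2 0 = 0 := rfl
  have e21 : Nmat a₁ a₂ a₃ g₁ g₂ 2 1 = g₂ := rfl
  have e22 : Nmat a₁ a₂ a₃ g₁ g₂ 2 2 = a₁ + a₂ := rfl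
  have hN := Nmat_entry_nonneg ha₁ ha₂ ha₃ hg₁ hg₂
  induction k with
  | zero =>
    refine ⟨fun i j => ?_, ?_, ?_, ?_, ?_, ?_, ?_⟩ <;> simp only [pow_zero]
    · rw [Matrix.one_apply]; split <;> norm_num
    · exact Matrix.one_apply_ne (by decide)
    · exact Matrix.one_apply_ne (by decide)
    · exact Matrix.one_apply_ne (by decide)
    · rw [Matrix.one_apply_eq]
    · rw [Matrix.one_apply_eq]
    · rw [Matrix.one_apply_eq]
  | succ k ih =>
    obtain ⟨h0, h01, h02, h12, h00, h11, h22⟩ := ih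
    refine ⟨fun i j => ?_, ?_, ?_, ?_, ?_, ?_, ?_⟩ <;>
      rw [pow_succ, Matrix.mul_apply, Fin.sum_univ_three]
    · exact add_nonneg (add_nonneg (mul_nonneg (h0 _ _) (hN _ _)) (mul_nonneg (h0 _ _) (hN _ _)))
        (mul_nonneg (h0 _ _) (hN _ _))
    · rw [e01, e11, e21, h01, h02]; ring
    · rw [e02, e12, e22, h02]; ring
    · rw [e02, e12, e22, h12]; ring
    · rw [e00, e10, e20, h00, h01, h02, pow_succ]; ring
    · rw [e01, e11, e21, h11, h12, pow_succ]; ring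
    · rw [e02, e12, e22, h22, pow_succ]; ring
theorem diag_tsum (s d : ℝ) :
    ∑' k : ℕ, ((Nat.factorial k : ℝ))⁻¹ * (s ^ k * d ^ k) = Real.exp (s * d) := by
  have h : ∀ k : ℕ, ((Nat.factorial k : ℝ))⁻¹ * (s ^ k * d ^ k)
      = ((Nat.factorial k : ℝ))⁻¹ • (s * d) ^ k := by
    intro k; rw [mul_pow, smul_eq_mul]
  rw [tsum_congr h, Real.exp_eq_exp_ℝ, NormedSpace.exp_eq_tsum ℝ]

theorem expA_nonneg (ha₁ : 0 ≤ a₁) (ha₂ : 0 ≤ a₂) (ha₃ : 0 ≤ a₃)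
    (hg₁ : 0 ≤ g₁) (hg₂ : 0 ≤ g₂) {s : ℝ} (hs : 0 ≤ s) (i j : Fin 3) :
    0 ≤ (NormedSpace.exp (s • Amat a₁ a₂ a₃ g₁ g₂)) i j := by
  rw [exp_smul_Amat_entry]
  refine mul_nonneg (Real.exp_pos _).le (tsum_nonneg fun k => ?_)
  have := (Npow_props ha₁ ha₂ ha₃ hg₁ hg₂ k).1 i j
  positivity

theorem expA_upper (ha₁ : 0 ≤ a₁) (ha₂ : 0 ≤ a₂) (ha₃ : 0 ≤ a₃)
    (hg₁ : 0 ≤ g₁) (hg₂ : 0 ≤ g₂) (s : ℝ) :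
    (NormedSpace.exp (s • Amat a₁ a₂ a₃ g₁ g₂)) 0 1 = 0 ∧
    (NormedSpace.exp (s • Amat a₁ a₂ a₃ g₁ g₂)) 0 2 = 0 ∧
    (NormedSpace.exp (s • Amat a₁ a₂ a₃ g₁ g₂)) 1 2 = 0 := by
  refine ⟨?_, ?_, ?_⟩ <;> rw [exp_smul_Amat_entry] <;>
    [ (have h : ∀ k : ℕ, ((Nat.factorial k : ℝ))⁻¹ * (s ^ k * (Nmat a₁ a₂ a₃ g₁ g₂ ^ k) 0 1) = 0 :=
        fun k => by rw [(Npow_props ha₁ ha₂ ha₃ hg₁ hg₂ k).2.1]; ring);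
      (have h : ∀ k : ℕ, ((Nat.factorial k : ℝ))⁻¹ * (s ^ k * (Nmat a₁ a₂ a₃ g₁ g₂ ^ k) 0 2) = 0 :=
        fun k => by rw [(Npow_props ha₁ ha₂ ha₃ hg₁ hg₂ k).2.2.1]; ring);
      (have h : ∀ k : ℕ, ((Nat.factorial k : ℝ))⁻¹ * (s ^ k * (Nmat a₁ a₂ a₃ g₁ g₂ ^ k) 1 2) = 0 :=
        fun k => by rw [(Npow_props ha₁ ha₂ ha₃ hg₁ hg₂ k).2.2.2.1]; ring)] <;>
    rw [tsum_congr h, tsum_zero, mul_zero]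

theorem expA_diag (ha₁ : 0 ≤ a₁) (ha₂ : 0 ≤ a₂) (ha₃ : 0 ≤ a₃)
    (hg₁ : 0 ≤ g₁) (hg₂ : 0 ≤ g₂) (s : ℝ) :
    (NormedSpace.exp (s • Amat a₁ a₂ a₃ g₁ g₂)) 0 0 = Real.exp (-(a₁ * s)) ∧
    (NormedSpace.exp (s • Amat a₁ a₂ a₃ g₁ g₂)) 1 1 = Real.exp (-(a₂ * s)) ∧
    (NormedSpace.exp (s • Amat a₁ a₂ a₃ g₁ g₂)) 2 2 = Real.exp (-(a₃ * s)) := by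
  refine ⟨?_, ?_, ?_⟩ <;> rw [exp_smul_Amat_entry]
  · have h : ∀ k : ℕ, ((Nat.factorial k : ℝ))⁻¹ * (s ^ k * (Nmat a₁ a₂ a₃ g₁ g₂ ^ k) 0 0)
        = ((Nat.factorial k : ℝ))⁻¹ * (s ^ k * (a₂ + a₃) ^ k) :=
      fun k => by rw [(Npow_props ha₁ ha₂ ha₃ hg₁ hg₂ k).2.2.2.2.1]
    rw [tsum_congr h, diag_tsum, ← Real.exp_add]; congr 1; ring
  · have h : ∀ k : ℕ, ((Nat.factorial k : ℝ))⁻¹ * (s ^ k * (Nmat a₁ a₂ a₃ g₁ g₂ ^ k) 1 1)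
        = ((Nat.factorial k : ℝ))⁻¹ * (s ^ k * (a₁ + a₃) ^ k) :=
      fun k => by rw [(Npow_props ha₁ ha₂ ha₃ hg₁ hg₂ k).2.2.2.2.2.1]
    rw [tsum_congr h, diag_tsum, ← Real.exp_add]; congr 1; ring
  · have h : ∀ k : ℕ, ((Nat.factorial k : ℝ))⁻¹ * (s ^ k * (Nmat a₁ a₂ a₃ g₁ g₂ ^ k) 2 2)
        = ((Nat.factorial k : ℝ))⁻¹ * (s ^ k * (a₁ + a₂) ^ k) :=
      fun k => by rw [(Npow_props ha₁ ha₂ ha₃ hg₁ hg₂ k).2.2.2.2.2.2]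
    rw [tsum_congr h, diag_tsum, ← Real.exp_add]; congr 1; ring

theorem expA_20_pos (ha₁ : 0 ≤ a₁) (ha₂ : 0 ≤ a₂) (ha₃ : 0 ≤ a₃)
    (hg₁ : 0 < g₁) (hg₂ : 0 < g₂) {s : ℝ} (hs : 0 < s) :
    0 < (NormedSpace.exp (s • Amat a₁ a₂ a₃ g₁ g₂)) 2 0 := by
  rw [exp_smul_Amat_entry]
  refine mul_pos (Real.exp_pos _) ?_
  have hterm : 0 < ((Nat.factorial 2 : ℝ))⁻¹ * (s ^ 2 * (Nmat a₁ a₂ a₃ g₁ g₂ ^ 2) 2 0) := by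
    have h2 : (Nmat a₁ a₂ a₃ g₁ g₂ ^ 2) 2 0 = g₂ * g₁ := by
      rw [pow_two, Matrix.mul_apply, Fin.sum_univ_three]
      show (0:ℝ) * (a₂ + a₃) + g₂ * g₁ + (a₁ + a₂) * 0 = g₂ * g₁
      ring
    rw [h2]
    positivity
  refine lt_of_lt_of_le hterm ?_
  exact Summable.le_tsum (exp_entry_summable s 2 0) 2 fun k _ => by
    have := (Npow_props ha₁ ha₂ ha₃ hg₁.le hg₂.le k).1 2 0
    positivity

end XiPosHelpers

/-- Positivity of the 1-cycle output: `ξ_T(τ) > 0` for every `T > 0` and `τ ≥ 0`. -/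
theorem xi_pos
    (a₁ a₂ a₃ g₁ g₂ : ℝ)
    (ha₁ : 0 < a₁) (ha₂ : 0 < a₂) (ha₃ : 0 < a₃) (hg₁ : 0 < g₁) (hg₂ : 0 < g₂)
    (T τ : ℝ) (hT : 0 < T) (hτ : 0 ≤ τ) :
    0 < xi a₁ a₂ a₃ g₁ g₂ T τ := by
  obtain ⟨E, hE⟩ : ∃ M, M = NormedSpace.exp (T • Amat a₁ a₂ a₃ g₁ g₂) := ⟨_, rfl⟩
  obtain ⟨F, hF⟩ : ∃ M, M = NormedSpace.exp (τ • Amat a₁ a₂ a₃ g₁ g₂) := ⟨_, rfl⟩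
  obtain ⟨hE01, hE02, hE12⟩ := expA_upper ha₁.le ha₂.le ha₃.le hg₁.le hg₂.le T
  obtain ⟨hE00, hE11, hE22⟩ := expA_diag ha₁.le ha₂.le ha₃.le hg₁.le hg₂.le T
  rw [← hE] at hE01 hE02 hE12 hE00 hE11 hE22
  have hEnn : ∀ i j, 0 ≤ E i j := by
    rw [hE]; exact expA_nonneg ha₁.le ha₂.le ha₃.le hg₁.le hg₂.le hT.le
  have hFnn : ∀ i j, 0 ≤ F i j := by
    rw [hF]; exact expA_nonneg ha₁.le ha₂.le ha₃.le hg₁.le hg₂.le hτ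
  have hF22 : F 2 2 = Real.exp (-(a₃ * τ)) := by
    rw [hF]; exact (expA_diag ha₁.le ha₂.le ha₃.le hg₁.le hg₂.le τ).2.2
  have hE20 : 0 < E 2 0 := by
    rw [hE]; exact expA_20_pos ha₁.le ha₂.le ha₃.le hg₁ hg₂ hT
  -- diagonal entries strictly below 1
  have hd : ∀ a : ℝ, 0 < a → Real.exp (-(a * T)) < 1 := fun a ha => by
    rw [← Real.exp_zero]
    exact Real.exp_lt_exp.2 (by nlinarith)
  have hd0 : 0 < 1 - E 0 0 := by rw [hE00]; linarith [hd a₁ ha₁]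
  have hd1 : 0 < 1 - E 1 1 := by rw [hE11]; linarith [hd a₂ ha₂]
  have hd2 : 0 < 1 - E 2 2 := by rw [hE22]; linarith [hd a₃ ha₃]
  -- determinant
  have hdet : (1 - E).det = (1 - E 0 0) * ((1 - E 1 1) * (1 - E 2 2)) := by
    have o : ∀ i j : Fin 3, i ≠ j → (1 : Matrix (Fin 3) (Fin 3) ℝ) i j = 0 :=
      fun i j h => Matrix.one_apply_ne h
    have od : ∀ i : Fin 3, (1 : Matrix (Fin 3) (Fin 3) ℝ) i i = 1 :=
      fun i => Matrix.one_apply_eq i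
    rw [Matrix.det_fin_three]
    simp only [Matrix.sub_apply, od, o 0 1 (by decide), o 0 2 (by decide), o 1 2 (by decide),
      o 1 0 (by decide), o 2 0 (by decide), o 2 1 (by decide), hE01, hE02, hE12]
    ring
  have hdetU : IsUnit (1 - E).det := by
    rw [hdet]; exact (by positivity : (0:ℝ) < _).ne'.isUnit
  obtain ⟨y, hy⟩ : ∃ y : Fin 3 → ℝ, y = (1 - E)⁻¹.mulVec Bvec := ⟨_, rfl⟩
  have hsolve : (1 - E).mulVec y = Bvec := by
    rw [hy, Matrix.mulVec_mulVec, Matrix.mul_nonsing_inv _ hdetU, Matrix.one_mulVec]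
  have comp : ∀ i : Fin 3,
      (1 - E) i 0 * y 0 + (1 - E) i 1 * y 1 + (1 - E) i 2 * y 2 = Bvec i := by
    intro i
    have := congr_fun hsolve i
    rw [Matrix.mulVec, dotProduct, Fin.sum_univ_three] at this
    exact this
  have s00 : (1 - E) 0 0 = 1 - E 0 0 := by rw [Matrix.sub_apply, Matrix.one_apply_eq]
  have s11 : (1 - E) 1 1 = 1 - E 1 1 := by rw [Matrix.sub_apply, Matrix.one_apply_eq]
  have s22 : (1 - E) 2 2 = 1 - E 2 2 := by rw [Matrix.sub_apply, Matrix.one_apply_eq]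
  have s01 : (1 - E) 0 1 = 0 := by
    rw [Matrix.sub_apply, Matrix.one_apply_ne (by decide), hE01, sub_zero]
  have s02 : (1 - E) 0 2 = 0 := by
    rw [Matrix.sub_apply, Matrix.one_apply_ne (by decide), hE02, sub_zero]
  have s12 : (1 - E) 1 2 = 0 := by
    rw [Matrix.sub_apply, Matrix.one_apply_ne (by decide), hE12, sub_zero]
  have s10 : (1 - E) 1 0 = -(E 1 0) := by
    rw [Matrix.sub_apply, Matrix.one_apply_ne (by decide), zero_sub]
  have s20 : (1 - E) 2 0 = -(E 2 0) := by
    rw [Matrix.sub_apply, Matrix.one_apply_ne (by decide), zero_sub]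
  have s21 : (1 - E) 2 1 = -(E 2 1) := by
    rw [Matrix.sub_apply, Matrix.one_apply_ne (by decide), zero_sub]
  have c0 := comp 0
  have c1 := comp 1
  have c2 := comp 2
  rw [s00, s01, s02] at c0
  rw [s10, s11, s12] at c1
  rw [s20, s21, s22] at c2
  have hB0 : Bvec 0 = 1 := by simp [Bvec]
  have hB1 : Bvec 1 = 0 := by simp [Bvec]
  have hB2 : Bvec 2 = 0 := by simp [Bvec]
  rw [hB0] at c0; rw [hB1] at c1; rw [hB2] at c2
  have hy0 : 0 < y 0 := by
    by_contra h
    push_neg at h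
    have := mul_nonpos_of_nonneg_of_nonpos hd0.le h
    linarith
  have hy1 : 0 ≤ y 1 := by
    by_contra h
    push_neg at h
    have h1 := mul_neg_of_pos_of_neg hd1 h
    have h2 := mul_nonneg (hEnn 1 0) hy0.le
    linarith
  have hy2 : 0 < y 2 := by
    by_contra h
    push_neg at h
    have h1 := mul_nonpos_of_nonneg_of_nonpos hd2.le h
    have h2 := mul_pos hE20 hy0
    have h3 := mul_nonneg (hEnn 2 1) hy1
    linarith
  -- final assembly
  have hxi : xi a₁ a₂ a₃ g₁ g₂ T τ = F 2 0 * y 0 + F 2 1 * y 1 + F 2 2 * y 2 := by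
    rw [xi, Cout, ← Matrix.mulVec_mulVec, ← hE, ← hF, ← hy, Matrix.mulVec, dotProduct,
      Fin.sum_univ_three]
    
  rw [hxi]
  have hpos : 0 < F 2 2 * y 2 := by rw [hF22]; positivity
  exact add_pos_of_nonneg_of_pos
    (add_nonneg (mul_nonneg (hFnn 2 0) hy0.le) (mul_nonneg (hFnn 2 1) hy1)) hpos
end

section
/- Let F, Φ : ℝ → ℝ be differentiable at ȳ₀ ∈ ℝ, and define the map Q : ℝ³ → ℝ³ by Q(ξ) = e^{Φ(Cξ) A} (ξ + F(Cξ) B). Let X ∈ ℝ³ satisfy CX = ȳ₀, set T = Φ(ȳ₀) and λ = F(ȳ₀), and assume the fixed-point relation X = e^{TA}(X + λB). Then Q is Fréchet differentiable at X, and its derivative is the linear map h ↦ e^{TA} h + (C h) · (F′(ȳ₀) · e^{TA} B + Φ′(ȳ₀) · A X); equivalently, the Jacobian of Q at X equals e^{TA} + K C with K = F′(ȳ₀) e^{TA} B + Φ′(ȳ₀) A X. -/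
open Matrix

attribute [local instance] Matrix.linftyOpNormedAddCommGroup Matrix.linftyOpNormedRing
  Matrix.linftyOpNormedAlgebra Matrix.instCompleteSpace

/-- `mulVec` as a linear map in the matrix argument, valued in continuous linear maps. -/
noncomputable def mulVecCLM : Matrix (Fin 3) (Fin 3) ℝ →ₗ[ℝ] ((Fin 3 → ℝ) →L[ℝ] (Fin 3 → ℝ)) where
  toFun M := LinearMap.toContinuousLinearMap M.mulVecLin
  map_add' M N := by ext v; simp [Matrix.add_mulVec]
  map_smul' c M := by ext v; simp [Matrix.smul_mulVec]

/-- Differentiability of the Poincaré-type map `Q(ξ) = e^{Φ(Cξ)A}(ξ + F(Cξ)B)` at a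
fixed point `X` with `CX = ȳ₀`, `T = Φ(ȳ₀)`, `λ = F(ȳ₀)`: the Fréchet derivative is
`h ↦ e^{TA}h + (Ch)·(F′(ȳ₀)e^{TA}B + Φ′(ȳ₀)AX)`, i.e. the Jacobian is `e^{TA} + KC`. -/
theorem jacobian_of_Q
    (a₁ a₂ a₃ g₁ g₂ : ℝ)
    (ha₁ : 0 < a₁) (ha₂ : 0 < a₂) (ha₃ : 0 < a₃) (hg₁ : 0 < g₁) (hg₂ : 0 < g₂)
    (F Φ : ℝ → ℝ) (ybar₀ : ℝ)
    (hF : DifferentiableAt ℝ F ybar₀) (hΦ : DifferentiableAt ℝ Φ ybar₀)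
    (X : Fin 3 → ℝ) (hCX : Cout X = ybar₀)
    (hfix : X = (NormedSpace.exp (Φ ybar₀ • Amat a₁ a₂ a₃ g₁ g₂)).mulVec
      (X + F ybar₀ • Bvec)) :
    HasFDerivAt
      (fun ξ : Fin 3 → ℝ =>
        (NormedSpace.exp (Φ (Cout ξ) • Amat a₁ a₂ a₃ g₁ g₂)).mulVec
          (ξ + F (Cout ξ) • Bvec))
      (LinearMap.toContinuousLinearMap
          (Matrix.mulVecLin (NormedSpace.exp (Φ ybar₀ • Amat a₁ a₂ a₃ g₁ g₂))) +
        (ContinuousLinearMap.proj 2 : (Fin 3 → ℝ) →L[ℝ] ℝ).smulRight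
          (deriv F ybar₀ •
              (NormedSpace.exp (Φ ybar₀ • Amat a₁ a₂ a₃ g₁ g₂)).mulVec Bvec +
            deriv Φ ybar₀ • (Amat a₁ a₂ a₃ g₁ g₂).mulVec X))
      X := by
  set A := Amat a₁ a₂ a₃ g₁ g₂ with hA
  set T := Φ ybar₀ with hT
  -- derivative of ξ ↦ Cout ξ
  have hCout : HasFDerivAt Cout (ContinuousLinearMap.proj 2 : (Fin 3 → ℝ) →L[ℝ] ℝ) X :=
    (ContinuousLinearMap.proj 2 : (Fin 3 → ℝ) →L[ℝ] ℝ).hasFDerivAt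
  -- derivative of ξ ↦ Φ (Cout ξ)
  have hΦC : HasFDerivAt (fun ξ : Fin 3 → ℝ => Φ (Cout ξ))
      (deriv Φ ybar₀ • (ContinuousLinearMap.proj 2 : (Fin 3 → ℝ) →L[ℝ] ℝ)) X := by
    have := (hΦ.hasDerivAt).comp_hasFDerivAt_of_eq X hCout hCX.symm
    exact this
  -- derivative of ξ ↦ F (Cout ξ)
  have hFC : HasFDerivAt (fun ξ : Fin 3 → ℝ => F (Cout ξ))
      (deriv F ybar₀ • (ContinuousLinearMap.proj 2 : (Fin 3 → ℝ) →L[ℝ] ℝ)) X := by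
    have := (hF.hasDerivAt).comp_hasFDerivAt_of_eq X hCout hCX.symm
    exact this
  -- derivative of t ↦ exp(t • A) at T
  have hexp : HasDerivAt (fun t : ℝ => NormedSpace.exp (t • A))
      (A * NormedSpace.exp (T • A)) T := _root_.hasDerivAt_exp_smul_const' A T
  -- derivative of ξ ↦ exp(Φ(Cout ξ) • A)
  have hexp' : HasFDerivAt (fun t : ℝ => NormedSpace.exp (t • A))
      ((1 : ℝ →L[ℝ] ℝ).smulRight (A * NormedSpace.exp (T • A))) (Φ (Cout X)) := by
    rw [hCX]; exact hexp.hasFDerivAt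
  have hM : HasFDerivAt (fun ξ : Fin 3 → ℝ => NormedSpace.exp (Φ (Cout ξ) • A))
      (((1 : ℝ →L[ℝ] ℝ).smulRight (A * NormedSpace.exp (T • A))).comp
        (deriv Φ ybar₀ • (ContinuousLinearMap.proj 2 : (Fin 3 → ℝ) →L[ℝ] ℝ))) X :=
    by have := hexp'.comp X hΦC; exact this
  -- derivative of c ξ := mulVecCLM (exp(Φ(Cout ξ) • A))
  have hc : HasFDerivAt (fun ξ : Fin 3 → ℝ => mulVecCLM (NormedSpace.exp (Φ (Cout ξ) • A)))
      ((LinearMap.toContinuousLinearMap mulVecCLM).comp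
        (((1 : ℝ →L[ℝ] ℝ).smulRight (A * NormedSpace.exp (T • A))).comp
          (deriv Φ ybar₀ • (ContinuousLinearMap.proj 2 : (Fin 3 → ℝ) →L[ℝ] ℝ)))) X :=
    (LinearMap.toContinuousLinearMap mulVecCLM).hasFDerivAt.comp X hM
  -- derivative of u ξ := ξ + F (Cout ξ) • Bvec
  have hu : HasFDerivAt (fun ξ : Fin 3 → ℝ => ξ + F (Cout ξ) • Bvec)
      (ContinuousLinearMap.id ℝ (Fin 3 → ℝ) +
        (deriv F ybar₀ • (ContinuousLinearMap.proj 2 : (Fin 3 → ℝ) →L[ℝ] ℝ)).smulRight Bvec) X := by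
    have h2 : HasFDerivAt (fun ξ : Fin 3 → ℝ => F (Cout ξ) • Bvec)
        ((F ybar₀) • (0 : (Fin 3 → ℝ) →L[ℝ] (Fin 3 → ℝ)) +
          (deriv F ybar₀ • (ContinuousLinearMap.proj 2 : (Fin 3 → ℝ) →L[ℝ] ℝ)).smulRight Bvec) X := by
      have := hFC.smul (hasFDerivAt_const Bvec X)
      simpa [hCX] using this
    have := (hasFDerivAt_id X).add h2
    simpa using this
  have key := hc.clm_apply hu
  have hfun : (fun ξ : Fin 3 → ℝ =>
      (mulVecCLM (NormedSpace.exp (Φ (Cout ξ) • A))) (ξ + F (Cout ξ) • Bvec)) =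
      (fun ξ : Fin 3 → ℝ =>
        (NormedSpace.exp (Φ (Cout ξ) • A)).mulVec (ξ + F (Cout ξ) • Bvec)) := rfl
  rw [hfun] at key
  refine key.congr_fderiv (Eq.symm ?_)
  ext h
  have hfix' : (NormedSpace.exp (T • A)).mulVec (X + F ybar₀ • Bvec) = X := hfix.symm
  simp only [ContinuousLinearMap.add_apply, ContinuousLinearMap.coe_comp',
    Function.comp_apply, ContinuousLinearMap.flip_apply, ContinuousLinearMap.smul_apply,
    ContinuousLinearMap.coe_smul', Pi.smul_apply, ContinuousLinearMap.smulRight_apply,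
    ContinuousLinearMap.proj_apply, ContinuousLinearMap.id_apply,
    LinearMap.coe_toContinuousLinearMap', mulVecCLM, LinearMap.coe_mk, AddHom.coe_mk,
    Matrix.mulVecLin_apply, hCX, hfix']
  have h1 : NormedSpace.exp (T • A) *ᵥ X + F ybar₀ • NormedSpace.exp (T • A) *ᵥ Bvec
      = X := by
    rw [← Matrix.mulVec_smul, ← Matrix.mulVec_add]; exact hfix'
  have h2' : A *ᵥ X = A *ᵥ NormedSpace.exp (T • A) *ᵥ X +
      F ybar₀ • A *ᵥ NormedSpace.exp (T • A) *ᵥ Bvec := by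
    conv_lhs => rw [← h1]
    rw [Matrix.mulVec_add, Matrix.mulVec_smul]
  simp only [ContinuousLinearMap.one_apply, Matrix.smul_mulVec,
    ← Matrix.mulVec_mulVec, Matrix.mulVec_add, Matrix.mulVec_smul, h2']
  simp only [← hT, Pi.add_apply, Pi.smul_apply, smul_eq_mul]
  ring
end

section
/- For every T > 0 and every τ ∈ [0, T], one has ξ_T(τ) ≤ (g₁g₂/(a₂a₃)) · 1/(1 − e^{−a₁T}). (This is the ultimate upper bound of Lemma 1 specialized to the 1-cycle with unit dose and period T, whose output at phase τ equals ξ_T(τ).) -/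
open Matrix

namespace XiAux

open NormedSpace

lemma exp_entry_hasSum (M : Matrix (Fin 3) (Fin 3) ℝ) (i j : Fin 3) :
    HasSum (fun n : ℕ => ((n.factorial : ℝ))⁻¹ * (M ^ n) i j) (exp M i j) := by
  letI : SeminormedRing (Matrix (Fin 3) (Fin 3) ℝ) := Matrix.linftyOpSemiNormedRing
  letI : NormedRing (Matrix (Fin 3) (Fin 3) ℝ) := Matrix.linftyOpNormedRing
  letI : NormedAlgebra ℝ (Matrix (Fin 3) (Fin 3) ℝ) := Matrix.linftyOpNormedAlgebra
  have h := exp_series_hasSum_exp' (𝕂 := ℝ) M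
  have h2 : HasSum (fun n : ℕ => ((n.factorial : ℝ))⁻¹ • (M ^ n) i j) (exp M i j) :=
    h.map (AddMonoidHom.mk' (fun N : Matrix (Fin 3) (Fin 3) ℝ => N i j) (fun a b => rfl))
      ((continuous_apply j).comp (continuous_apply i))
  simpa using h2

lemma Amat_pow_row0 (a₁ a₂ a₃ g₁ g₂ : ℝ) (n : ℕ) :
    ((Amat a₁ a₂ a₃ g₁ g₂) ^ n) 0 0 = (-a₁) ^ n ∧
    ((Amat a₁ a₂ a₃ g₁ g₂) ^ n) 0 1 = 0 ∧
    ((Amat a₁ a₂ a₃ g₁ g₂) ^ n) 0 2 = 0 := by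
  induction n with
  | zero => simp [Matrix.one_apply]
  | succ n ih =>
    obtain ⟨h1, h2, h3⟩ := ih
    refine ⟨?_, ?_, ?_⟩ <;>
      rw [pow_succ, Matrix.mul_apply, Fin.sum_univ_three, h1, h2, h3] <;>
      simp [Amat]
    ring

lemma exp_row0 (a₁ a₂ a₃ g₁ g₂ s : ℝ) :
    exp (s • Amat a₁ a₂ a₃ g₁ g₂) 0 0 = Real.exp (-(a₁ * s)) ∧
    exp (s • Amat a₁ a₂ a₃ g₁ g₂) 0 1 = 0 ∧
    exp (s • Amat a₁ a₂ a₃ g₁ g₂) 0 2 = 0 := by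
  have key : ∀ j : Fin 3, ∀ c : ℝ,
      (∀ n : ℕ, ((s • Amat a₁ a₂ a₃ g₁ g₂) ^ n) 0 j = c ^ n) →
      exp (s • Amat a₁ a₂ a₃ g₁ g₂) 0 j = Real.exp c := by
    intro j c hc
    have h1 := exp_entry_hasSum (s • Amat a₁ a₂ a₃ g₁ g₂) 0 j
    simp only [hc] at h1
    have h2 : HasSum (fun n : ℕ => ((n.factorial : ℝ))⁻¹ * c ^ n) (exp c) := by
      simpa [smul_eq_mul] using exp_series_hasSum_exp' (𝕂 := ℝ) c
    rw [← Real.exp_eq_exp_ℝ] at h2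
    exact h1.unique h2
  have hz : ∀ j : Fin 3, (∀ n : ℕ, n ≠ 0 → ((Amat a₁ a₂ a₃ g₁ g₂) ^ n) 0 j = 0) → j ≠ 0 →
      exp (s • Amat a₁ a₂ a₃ g₁ g₂) 0 j = 0 := by
    intro j hj hj0
    have h1 := exp_entry_hasSum (s • Amat a₁ a₂ a₃ g₁ g₂) 0 j
    have he : ∀ n : ℕ, ((n.factorial : ℝ))⁻¹ * ((s • Amat a₁ a₂ a₃ g₁ g₂) ^ n) 0 j = 0 := by
      intro n
      rcases Nat.eq_zero_or_pos n with h | h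
      · subst h; simp [Matrix.one_apply, Ne.symm hj0]
      · rw [smul_pow, Matrix.smul_apply, hj n h.ne']
        simp
    simp only [he] at h1
    exact h1.unique hasSum_zero
  refine ⟨?_, ?_, ?_⟩
  · refine key 0 (-(a₁ * s)) fun n => ?_
    rw [smul_pow, Matrix.smul_apply, (Amat_pow_row0 a₁ a₂ a₃ g₁ g₂ n).1]
    rw [smul_eq_mul, ← mul_pow]; ring_nf
  · exact hz 1 (fun n _ => (Amat_pow_row0 a₁ a₂ a₃ g₁ g₂ n).2.1) (by decide)
  · exact hz 2 (fun n _ => (Amat_pow_row0 a₁ a₂ a₃ g₁ g₂ n).2.2) (by decide)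

lemma x_hasDerivAt (A : Matrix (Fin 3) (Fin 3) ℝ) (y : Fin 3 → ℝ) (i : Fin 3) (s : ℝ) :
    HasDerivAt (fun t : ℝ => (exp (t • A)).mulVec y i)
      ((A.mulVec ((exp (s • A)).mulVec y)) i) s := by
  letI : SeminormedRing (Matrix (Fin 3) (Fin 3) ℝ) := Matrix.linftyOpSemiNormedRing
  letI : NormedRing (Matrix (Fin 3) (Fin 3) ℝ) := Matrix.linftyOpNormedRing
  letI : NormedAlgebra ℝ (Matrix (Fin 3) (Fin 3) ℝ) := Matrix.linftyOpNormedAlgebra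
  have h := hasDerivAt_exp_smul_const' (𝕂 := ℝ) A s
  let L : Matrix (Fin 3) (Fin 3) ℝ →ₗ[ℝ] ℝ :=
    { toFun := fun N => N.mulVec y i
      map_add' := fun a b => by simp [Matrix.add_mulVec]
      map_smul' := fun c a => by simp [Matrix.smul_mulVec] }
  have hL : Continuous L := L.continuous_of_finiteDimensional
  have h2 := ((⟨L, hL⟩ : Matrix (Fin 3) (Fin 3) ℝ →L[ℝ] ℝ).hasFDerivAt).comp_hasDerivAt s h
  rw [Matrix.mulVec_mulVec]
  exact h2

lemma gron (f f' : ℝ → ℝ) (a C T : ℝ) (ha : 0 < a) (hT : 0 < T)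
    (hd : ∀ s, HasDerivAt f (f' s) s)
    (hb : ∀ s ∈ Set.Icc (0:ℝ) T, f' s ≤ C - a * f s)
    (hper : f T = f 0) :
    ∀ s ∈ Set.Icc (0:ℝ) T, f s ≤ C / a := by
  set g : ℝ → ℝ := fun s => Real.exp (a * s) * (f s - C / a) with hg
  have hgd : ∀ s, HasDerivAt g (Real.exp (a * s) * (a * f s + f' s - C)) s := by
    intro s
    have he : HasDerivAt (fun s : ℝ => Real.exp (a * s)) (a * Real.exp (a * s)) s := by
      simpa [mul_comm, Function.comp_def] using (Real.hasDerivAt_exp (a * s)).comp s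
        ((hasDerivAt_id s).const_mul a)
    have := he.mul ((hd s).sub_const (C / a))
    refine this.congr_deriv ?_
    have ha' : a ≠ 0 := ha.ne'
    linear_combination (-(Real.exp (a * s))) * (mul_div_cancel₀ C ha')
  have hanti : AntitoneOn g (Set.Icc 0 T) := by
    apply antitoneOn_of_deriv_nonpos (convex_Icc 0 T)
    · exact fun s _ => ((hgd s).continuousAt).continuousWithinAt
    · exact fun s _ => ((hgd s).differentiableAt).differentiableWithinAt
    · intro s hs
      rw [interior_Icc] at hs
      rw [(hgd s).deriv]
      have hbs := hb s (Set.mem_Icc.2 ⟨le_of_lt hs.1, le_of_lt hs.2⟩)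
      have : a * f s + f' s - C ≤ 0 := by linarith
      exact mul_nonpos_of_nonneg_of_nonpos (Real.exp_nonneg _) this
  have h0 : g T ≤ g 0 := hanti (Set.left_mem_Icc.2 hT.le) (Set.right_mem_Icc.2 hT.le) hT.le
  have hf0 : f 0 ≤ C / a := by
    rw [hg] at h0
    simp only [hper, mul_zero, Real.exp_zero, one_mul] at h0
    have hgt : 1 < Real.exp (a * T) := by
      rw [show (1:ℝ) = Real.exp 0 by simp]; exact Real.exp_lt_exp.2 (by positivity)
    nlinarith
  intro s hs
  have h1 : g s ≤ g 0 := hanti (Set.left_mem_Icc.2 hT.le) hs hs.1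
  rw [hg] at h1
  simp only [mul_zero, Real.exp_zero, one_mul] at h1
  have h2 : f 0 - C / a ≤ 0 := by linarith
  have h3 : Real.exp (a * s) * (f s - C / a) ≤ 0 := le_trans h1 h2
  have h4 : 0 < Real.exp (a * s) := Real.exp_pos _
  nlinarith

end XiAux

open XiAux NormedSpace

/-- Upper bound for the unit-dose 1-cycle output:
`ξ_T(τ) ≤ (g₁g₂/(a₂a₃)) · 1/(1 − e^{−a₁T})` for all `τ ∈ [0, T]`. -/
theorem xi_upper_bound
    (a₁ a₂ a₃ g₁ g₂ : ℝ)
    (ha₁ : 0 < a₁) (ha₂ : 0 < a₂) (ha₃ : 0 < a₃) (hg₁ : 0 < g₁) (hg₂ : 0 < g₂)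
    (T : ℝ) (hT : 0 < T) (τ : ℝ) (hτ : τ ∈ Set.Icc (0 : ℝ) T) :
    xi a₁ a₂ a₃ g₁ g₂ T τ ≤ g₁ * g₂ / (a₂ * a₃) * (1 / (1 - Real.exp (-a₁ * T))) := by
  obtain ⟨hτ0, hτT⟩ := hτ
  have hq1 : Real.exp (-(a₁ * T)) < 1 := by
    rw [show (1:ℝ) = Real.exp 0 by simp]
    exact Real.exp_lt_exp.2 (by nlinarith)
  have hq0 : 0 < 1 - Real.exp (-(a₁ * T)) := by linarith
  set A := Amat a₁ a₂ a₃ g₁ g₂ with hA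
  set y : Fin 3 → ℝ := ((1 - exp (T • A))⁻¹).mulVec Bvec with hy
  have hxi : xi a₁ a₂ a₃ g₁ g₂ T τ = ((exp (τ • A)).mulVec y) 2 := by
    rw [xi, Cout, hy, Matrix.mulVec_mulVec]
  have hRHSpos : 0 < g₁ * g₂ / (a₂ * a₃) * (1 / (1 - Real.exp (-a₁ * T))) := by
    rw [neg_mul]; positivity
  by_cases hinv : IsUnit (1 - exp (T • A)).det
  · have hEy : (1 - exp (T • A)).mulVec y = Bvec := by
      rw [hy, Matrix.mulVec_mulVec, Matrix.mul_nonsing_inv _ hinv, Matrix.one_mulVec]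
    have hr := exp_row0 a₁ a₂ a₃ g₁ g₂ T
    have hx0 : ∀ s : ℝ, ((exp (s • A)).mulVec y) 0 = Real.exp (-(a₁ * s)) * y 0 := by
      intro s
      have hrs := exp_row0 a₁ a₂ a₃ g₁ g₂ s
      rw [hA]
      simp [Matrix.mulVec, dotProduct, Fin.sum_univ_three, hrs.1, hrs.2.1, hrs.2.2]
    have hy0 : y 0 = 1 / (1 - Real.exp (-(a₁ * T))) := by
      have h := congrFun hEy 0
      rw [Matrix.sub_mulVec, Matrix.one_mulVec] at h
      have h2 : (exp (T • A)).mulVec y 0 = Real.exp (-(a₁ * T)) * y 0 := hx0 T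
      simp only [Pi.sub_apply, h2, Bvec] at h
      have h3 : y 0 * (1 - Real.exp (-(a₁ * T))) = 1 := by
        simp at h; linarith
      field_simp
      linarith
    have hy0nn : 0 ≤ y 0 := by rw [hy0]; positivity
    have hx0le : ∀ s ∈ Set.Icc (0:ℝ) T, ((exp (s • A)).mulVec y) 0 ≤ y 0 := by
      intro s hs
      rw [hx0 s]
      have : Real.exp (-(a₁ * s)) ≤ 1 := by
        rw [show (1:ℝ) = Real.exp 0 by simp]
        exact Real.exp_le_exp.2 (by nlinarith [hs.1])
      nlinarith
    have hper : (exp (T • A)).mulVec y = y - Bvec := by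
      rw [Matrix.sub_mulVec, Matrix.one_mulVec] at hEy
      have := sub_eq_iff_eq_add.mp hEy
      ext i
      have := congrFun this i
      simp [Pi.sub_apply] at this ⊢
      linarith
    have hzero : (exp ((0:ℝ) • A)).mulVec y = y := by
      rw [zero_smul, exp_zero, Matrix.one_mulVec]
    have hAmv1 : ∀ v : Fin 3 → ℝ, A.mulVec v 1 = g₁ * v 0 - a₂ * v 1 := by
      intro v
      rw [hA]
      simp [Amat, Matrix.mulVec, dotProduct, Fin.sum_univ_three]
      ring
    have hAmv2 : ∀ v : Fin 3 → ℝ, A.mulVec v 2 = g₂ * v 1 - a₃ * v 2 := by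
      intro v
      rw [hA]
      simp [Amat, Matrix.mulVec, dotProduct, Fin.sum_univ_three]
      ring
    set M₁ : ℝ := 1 / (1 - Real.exp (-(a₁ * T))) with hM₁
    have hM₁pos : 0 < M₁ := by rw [hM₁]; positivity
    -- second component
    have hf1 : ∀ s ∈ Set.Icc (0:ℝ) T, ((exp (s • A)).mulVec y) 1 ≤ g₁ * M₁ / a₂ := by
      apply gron _ (fun s => (A.mulVec ((exp (s • A)).mulVec y)) 1) a₂ (g₁ * M₁) T ha₂ hT
      · exact fun s => x_hasDerivAt A y 1 s
      · intro s hs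
        rw [hAmv1]
        have h1 := hx0le s hs
        rw [hy0] at h1
        nlinarith
      · rw [hper, hzero]
        simp [Bvec]
    -- third component
    have hf2 : ∀ s ∈ Set.Icc (0:ℝ) T, ((exp (s • A)).mulVec y) 2 ≤ g₂ * (g₁ * M₁ / a₂) / a₃ := by
      apply gron _ (fun s => (A.mulVec ((exp (s • A)).mulVec y)) 2) a₃ (g₂ * (g₁ * M₁ / a₂)) T ha₃ hT
      · exact fun s => x_hasDerivAt A y 2 s
      · intro s hs
        rw [hAmv2]
        have h1 := hf1 s hs
        nlinarith
      · rw [hper, hzero]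
        simp [Bvec]
    have final := hf2 τ ⟨hτ0, hτT⟩
    rw [hxi]
    refine final.trans (le_of_eq ?_)
    rw [hM₁, neg_mul]
    field_simp
  · rw [hxi, hy, Matrix.nonsing_inv_apply_not_isUnit _ hinv, Matrix.zero_mulVec,
      Matrix.mulVec_zero]
    simpa using hRHSpos.le
end
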